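/- arXiv:1611.08870 — 3 statements merged into one kernel-verified Lean document; each statement's English description precedes it below -/
import Mathlib

section
/- The Baire space N has a π-tree F such that cofin(ω) ≫ Rise_F(N). -/
open Set

universe u v

/-- A family `γ` π-refines `δ`: every nonempty member of `δ` contains a
nonempty member of `γ`. -/
def PiRefines {α : Type*} (γ δ : Set (Set α)) : Prop :=
  ∀ D ∈ δ, D.Nonempty → ∃ G ∈ γ, G.Nonempty ∧ G ⊆ D

/-- The finite intersection property. -/
def HasFIP {α : Type*} (γ : Set (Set α)) : Prop :=
  ∀ δ : Set (Set α), δ ⊆ γ → δ.Finite → δ.Nonempty → (⋂₀ δ).Nonempty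

/-- `cofin A` is the family of complements in `A` of finite subsets of `A`. -/
def cofin (A : Set ℕ) : Set (Set ℕ) :=
  {B | ∃ C : Set ℕ, C.Finite ∧ C ⊆ A ∧ B = A \ C}

/-- A foliage tree on `X`: a set-theoretic tree (strict partial order with
well-ordered sets of strict predecessors) with a leaf (a subset of `X`)
attached to each node. -/
structure FoliageTree (X : Type u) where
  Node : Type
  lt : Node → Node → Prop
  lt_irrefl : ∀ a, ¬ lt a a
  lt_trans : ∀ {a b c}, lt a b → lt b c → lt a c
  wellOrdered : ∀ a : Node, IsWellOrder {b : Node // lt b a} fun x y => lt x.1 y.1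
  leaf : Node → Set X

/-- Strict proper-extension order on finite sequences of naturals. -/
def seqLT (a b : List ℕ) : Prop := a <+: b ∧ a ≠ b

namespace FoliageTree

variable {X : Type u}

/-- The sons (immediate successors) of a node. -/
def Sons (F : FoliageTree X) (x : F.Node) : Set F.Node :=
  {s | F.lt x s ∧ ¬ ∃ t, F.lt x t ∧ F.lt t s}

/-- A node is maximal if it has no strict successor. -/
def IsMaxNode (F : FoliageTree X) (x : F.Node) : Prop := ¬ ∃ s, F.lt x s

/-- A chain of nodes. -/
def IsChainN (F : FoliageTree X) (C : Set F.Node) : Prop :=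
  ∀ x ∈ C, ∀ y ∈ C, F.lt x y ∨ x = y ∨ F.lt y x

/-- A branch is a maximal chain. -/
def IsBranch (F : FoliageTree X) (B : Set F.Node) : Prop :=
  F.IsChainN B ∧ ∀ C, F.IsChainN C → B ⊆ C → B = C

/-- The height of a node: the order type of its set of strict predecessors. -/
noncomputable def height (F : FoliageTree X) (v : F.Node) : Ordinal :=
  @Ordinal.type {b : F.Node // F.lt b v} (fun x y => F.lt x.1 y.1) (F.wellOrdered v)

/-- `shoot F v`: unions of leaves over cofinite sets of sons of `v`. -/
def shoot (F : FoliageTree X) (v : F.Node) : Set (Set X) :=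
  {S | ∃ C : Set F.Node, C ⊆ F.Sons v ∧ (F.Sons v \ C).Finite ∧ S = ⋃ s ∈ C, F.leaf s}

/-- `scope F p`: the nodes whose leaf contains `p`. -/
def scope (F : FoliageTree X) (p : X) : Set F.Node := {x | p ∈ F.leaf x}

/-- The union of all leaves. -/
def flesh (F : FoliageTree X) : Set X := ⋃ x, F.leaf x

/-- `F` is a foliage `ω,ω`-tree: its skeleton is order-isomorphic to
`(ω^{<ω}, ⊂)`. -/
def IsOmegaOmegaTree (F : FoliageTree X) : Prop := Nonempty (F.lt ≃r seqLT)

/-- `F` is locally strict: the leaf of every non-maximal node is the disjoint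
union of the leaves of its sons. -/
def LocallyStrict (F : FoliageTree X) : Prop :=
  ∀ x, ¬ F.IsMaxNode x →
    F.leaf x = (⋃ s ∈ F.Sons x, F.leaf s) ∧
      ∀ s ∈ F.Sons x, ∀ t ∈ F.Sons x, s ≠ t → Disjoint (F.leaf s) (F.leaf t)

/-- `F` has strict branches: it has nodes, and along every branch the
intersection of the leaves is a singleton. -/
def StrictBranches (F : FoliageTree X) : Prop :=
  Nonempty F.Node ∧ ∀ B, F.IsBranch B → ∃ p, (⋂ x ∈ B, F.leaf x) = {p}

/-- `r` is the root: the least node. -/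
def IsRoot (F : FoliageTree X) (r : F.Node) : Prop := ∀ x, r = x ∨ F.lt r x

/-- All leaves are open. -/
def OpenIn [TopologicalSpace X] (F : FoliageTree X) : Prop := ∀ x, IsOpen (F.leaf x)

/-- `F` is a Baire foliage tree on `X`. -/
def IsBaireFoliageTree [TopologicalSpace X] (F : FoliageTree X) : Prop :=
  F.OpenIn ∧ F.LocallyStrict ∧ F.IsOmegaOmegaTree ∧ F.StrictBranches ∧
    ∃ r, F.IsRoot r ∧ F.leaf r = Set.univ

/-- `F` grows into `X`. -/
def GrowsInto [TopologicalSpace X] (F : FoliageTree X) : Prop :=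
  ∀ p : X, ∀ U ∈ nhds p, ∃ z ∈ F.scope p, PiRefines (F.shoot z) {U}

/-- `F` is a π-tree on `X`. -/
def IsPiTree [TopologicalSpace X] (F : FoliageTree X) : Prop :=
  F.IsBaireFoliageTree ∧ F.GrowsInto

/-- `rise F p U`: the set of (finite) heights of nodes `v` whose leaf contains
`p` and whose shoot π-refines `{U}`. -/
noncomputable def rise (F : FoliageTree X) (p : X) (U : Set X) : Set ℕ :=
  {n | ∃ v ∈ F.scope p, PiRefines (F.shoot v) {U} ∧ F.height v = (n : Ordinal)}

/-- `Rise F`: all sets `rise F p U` for `p ∈ X` and `U` a neighbourhood of `p`. -/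
def Rise [TopologicalSpace X] (F : FoliageTree X) : Set (Set ℕ) :=
  {R | ∃ p U, U ∈ nhds p ∧ R = F.rise p U}

end FoliageTree

namespace BairePi

open FoliageTree

abbrev N := ℕ → ℕ

/-- The leaf of a finite sequence: the cylinder of functions extending it. -/
def bleaf (x : List ℕ) : Set N := {f | ∀ i < x.length, f i = x.getD i 0}

lemma seqLT_length {a b : List ℕ} (h : seqLT a b) : a.length < b.length :=
  lt_of_le_of_ne h.1.length_le (fun he => h.2 (h.1.eq_of_length he))

lemma seqLT_trans' {a b c : List ℕ} (h1 : seqLT a b) (h2 : seqLT b c) : seqLT a c :=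
  ⟨h1.1.trans h2.1, fun he => absurd ((seqLT_length h1).trans (seqLT_length h2))
    (by rw [he]; exact lt_irrefl _)⟩

lemma seqLT_of_prefix_lt {a b : List ℕ} (h : a <+: b) (hl : a.length < b.length) : seqLT a b :=
  ⟨h, fun he => by rw [he] at hl; exact lt_irrefl _ hl⟩

/-- The Baire π-tree: nodes are finite sequences, leaves are cylinders. -/
def btree : FoliageTree N where
  Node := List ℕ
  lt := seqLT
  lt_irrefl a h := h.2 rfl
  lt_trans h1 h2 := seqLT_trans' h1 h2
  wellOrdered a :=
    { trichotomous := fun x y => (fun (H : seqLT x.1 y.1 ∨ x = y ∨ seqLT y.1 x.1) hxy hyx =>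
        H.elim (fun h => absurd h hxy) (fun h => h.elim id (fun h => absurd h hyx))) <| by
        rcases List.prefix_or_prefix_of_prefix x.2.1 y.2.1 with h | h
        · by_cases he : x.1 = y.1
          · exact Or.inr (Or.inl (Subtype.ext he))
          · exact Or.inl ⟨h, he⟩
        · by_cases he : x.1 = y.1
          · exact Or.inr (Or.inl (Subtype.ext he))
          · exact Or.inr (Or.inr ⟨h, fun h' => he h'.symm⟩)
      wf := Subrelation.wf (fun {x y} h => seqLT_length h)
        (InvImage.wf (fun x : {b // seqLT b a} => x.1.length) Nat.lt_wfRel.wf) }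
  leaf := bleaf

lemma mem_sons {x s : List ℕ} : s ∈ btree.Sons x ↔ ∃ m, s = x ++ [m] := by
  constructor
  · rintro ⟨hlt, hnot⟩
    obtain ⟨t, rfl⟩ := hlt.1
    have ht0 : t ≠ [] := by rintro rfl; exact hlt.2 (by simp)
    have ht1 : 0 < t.length := List.length_pos_iff.2 ht0
    have hlen : t.length = 1 := by
      by_contra hne
      have h2 : 1 < t.length := by omega
      apply hnot
      refine ⟨x ++ t.take 1, ?_, ?_⟩
      · refine seqLT_of_prefix_lt ⟨t.take 1, rfl⟩ ?_
        simp only [List.length_append, List.length_take]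
        omega
      · refine seqLT_of_prefix_lt ⟨t.drop 1, by rw [List.append_assoc, List.take_append_drop]⟩ ?_
        simp only [List.length_append, List.length_take]
        omega
    obtain ⟨m, rfl⟩ := List.length_eq_one_iff.1 hlen
    exact ⟨m, rfl⟩
  · rintro ⟨m, rfl⟩
    refine ⟨seqLT_of_prefix_lt ⟨[m], rfl⟩ (by simp), ?_⟩
    rintro ⟨t, h1, h2⟩
    have l1 := seqLT_length h1
    have l2 := seqLT_length h2
    simp only [List.length_append, List.length_singleton] at l2
    omega

lemma getD_concat_lt (x : List ℕ) (m : ℕ) {i : ℕ} (hi : i < x.length) :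
    (x ++ [m]).getD i 0 = x.getD i 0 := by
  rw [List.getD_eq_getElem _ _ (by simp; omega), List.getD_eq_getElem _ _ hi]
  exact List.getElem_append_left hi

lemma getD_concat_self (x : List ℕ) (m : ℕ) : (x ++ [m]).getD x.length 0 = m := by
  rw [List.getD_eq_getElem _ _ (by simp)]
  exact List.getElem_concat_length rfl _

lemma mem_bleaf_concat {f : N} {x : List ℕ} {m : ℕ} :
    f ∈ bleaf (x ++ [m]) ↔ f ∈ bleaf x ∧ f x.length = m := by
  constructor
  · intro h
    refine ⟨fun i hi => ?_, ?_⟩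
    · rw [← getD_concat_lt x m hi]; exact h i (by simp; omega)
    · rw [← getD_concat_self x m]; exact h x.length (by simp)
  · rintro ⟨h1, h2⟩ i hi
    simp only [List.length_append, List.length_singleton] at hi
    rcases Nat.lt_or_ge i x.length with h | h
    · rw [getD_concat_lt x m h]; exact h1 i h
    · have hix : i = x.length := by omega
      subst hix; rw [getD_concat_self]; exact h2

lemma bleaf_eq_union (x : List ℕ) : bleaf x = ⋃ s ∈ btree.Sons x, bleaf s := by
  ext f
  simp only [Set.mem_iUnion, exists_prop]
  constructor
  · intro hf
    exact ⟨x ++ [f x.length], mem_sons.2 ⟨f x.length, rfl⟩, mem_bleaf_concat.2 ⟨hf, rfl⟩⟩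
  · rintro ⟨s, hs, hfs⟩
    obtain ⟨m, rfl⟩ := mem_sons.1 hs
    exact (mem_bleaf_concat.1 hfs).1

lemma btree_locallyStrict : btree.LocallyStrict := by
  intro x _
  refine ⟨bleaf_eq_union x, ?_⟩
  intro s hs t ht hst
  obtain ⟨m, rfl⟩ := mem_sons.1 hs
  obtain ⟨n, rfl⟩ := mem_sons.1 ht
  have hmn : m ≠ n := fun h => hst (by rw [h])
  rw [Set.disjoint_left]
  intro f hf1 hf2
  exact hmn (((mem_bleaf_concat.1 hf1).2.symm).trans (mem_bleaf_concat.1 hf2).2)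

lemma btree_height (v : List ℕ) : btree.height v = (v.length : Ordinal) := by
  have e : (fun (x y : {b : List ℕ // seqLT b v}) => seqLT x.1 y.1) ≃r
      ((· < ·) : Fin v.length → Fin v.length → Prop) :=
    { toFun := fun b => ⟨b.1.length, seqLT_length b.2⟩
      invFun := fun k => ⟨v.take k, seqLT_of_prefix_lt (v.take_prefix k)
        (by simp only [List.length_take]; omega)⟩
      left_inv := fun b => Subtype.ext (by
        have := List.prefix_iff_eq_take.1 b.2.1
        exact this.symm)
      right_inv := fun k => Fin.ext (by
        simp only [List.length_take]
        omega)
      map_rel_iff' := by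
        intro x y
        show x.1.length < y.1.length ↔ seqLT x.1 y.1
        constructor
        · intro h
          rcases List.prefix_or_prefix_of_prefix x.2.1 y.2.1 with hp | hp
          · exact seqLT_of_prefix_lt hp h
          · exact absurd hp.length_le (by simp only [not_le]; exact h)
        · exact seqLT_length }
  exact (@RelIso.ordinal_type_eq _ _ _ _ (btree.wellOrdered v) inferInstance e).trans
    (Ordinal.type_fin _)

lemma tri_of_comp {x y : List ℕ} (h : x <+: y ∨ y <+: x) : seqLT x y ∨ x = y ∨ seqLT y x := by
  by_cases he : x = y
  · exact Or.inr (Or.inl he)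
  · rcases h with h | h
    · exact Or.inl ⟨h, he⟩
    · exact Or.inr (Or.inr ⟨h, fun h' => he h'.symm⟩)

section Branch

variable {B : Set (List ℕ)}

lemma branch_comp (hB : btree.IsBranch B) :
    ∀ x ∈ B, ∀ y ∈ B, x <+: y ∨ y <+: x := by
  intro x hx y hy
  rcases hB.1 x hx y hy with h | h | h
  · exact Or.inl h.1
  · exact Or.inl (h ▸ List.prefix_rfl)
  · exact Or.inr h.1

lemma mem_of_comp (hB : btree.IsBranch B) {y : List ℕ}
    (hy : ∀ z ∈ B, y <+: z ∨ z <+: y) : y ∈ B := by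
  have hc : btree.IsChainN (insert y B) := by
    intro a ha b hb
    rcases ha with rfl | ha
    · rcases hb with rfl | hb
      · exact Or.inr (Or.inl rfl)
      · exact tri_of_comp (hy b hb)
    · rcases hb with rfl | hb
      · exact tri_of_comp ((hy a ha).symm)
      · exact hB.1 a ha b hb
  have := hB.2 _ hc (Set.subset_insert y B)
  rw [this]
  exact Set.mem_insert y B

lemma mem_of_prefix (hB : btree.IsBranch B) {x y : List ℕ}
    (hx : x ∈ B) (hyx : y <+: x) : y ∈ B := by
  apply mem_of_comp hB
  intro z hz
  rcases branch_comp hB x hx z hz with h | h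
  · exact Or.inl (hyx.trans h)
  · exact List.prefix_or_prefix_of_prefix hyx h

lemma nil_mem (hB : btree.IsBranch B) : ([] : List ℕ) ∈ B :=
  mem_of_comp hB (fun z _ => Or.inl (List.nil_prefix))

lemma exists_len (hB : btree.IsBranch B) : ∀ n : ℕ, ∃ x ∈ B, x.length = n := by
  intro n
  induction n with
  | zero => exact ⟨[], nil_mem hB, rfl⟩
  | succ n ih =>
    obtain ⟨x, hxB, hxl⟩ := ih
    have hex : ∃ y ∈ B, x.length < y.length := by
      by_contra hcon
      push_neg at hcon
      have hpre : ∀ z ∈ B, z <+: x := by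
        intro z hz
        rcases branch_comp hB x hxB z hz with h | h
        · have he : x = z := h.eq_of_length (le_antisymm h.length_le (hcon z hz))
          rw [he]
        · exact h
      have hmem : x ++ [0] ∈ B :=
        mem_of_comp hB (fun z hz => Or.inr ((hpre z hz).trans ⟨[0], rfl⟩))
      have := hcon _ hmem
      simp at this
    obtain ⟨y, hyB, hyl⟩ := hex
    refine ⟨y.take (n + 1), mem_of_prefix hB hyB (y.take_prefix _), ?_⟩
    simp only [List.length_take]
    omega

end Branch

lemma btree_strict : btree.StrictBranches := by
  refine ⟨⟨([] : List ℕ)⟩, ?_⟩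
  intro B hB
  choose g hgB hgl using exists_len hB
  refine ⟨fun i => (g (i + 1)).getD i 0, ?_⟩
  have key : ∀ x ∈ B, ∀ i, i < x.length → x.getD i 0 = (g (i + 1)).getD i 0 := by
    intro x hx i hi
    have h1 : g (i + 1) <+: x := by
      rcases branch_comp hB x hx (g (i + 1)) (hgB _) with h | h
      · have he : x = g (i + 1) :=
          h.eq_of_length (le_antisymm h.length_le (by rw [hgl]; omega))
        rw [he]
      · exact h
    have hi' : i < (g (i + 1)).length := by rw [hgl]; omega
    rw [List.getD_eq_getElem _ _ hi, List.getD_eq_getElem _ _ hi']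
    exact (h1.getElem hi').symm
  ext f
  simp only [Set.mem_iInter, Set.mem_singleton_iff]
  constructor
  · intro hf
    funext i
    exact hf (g (i + 1)) (hgB _) i (by rw [hgl]; omega)
  · rintro rfl x hx i hi
    exact (key x hx i hi).symm

lemma btree_open : btree.OpenIn := fun x => by
  rw [show btree.leaf x = PiNat.cylinder (fun i => x.getD i 0) x.length from rfl]
  exact PiNat.isOpen_cylinder _ _ _

lemma btree_root : btree.IsRoot ([] : List ℕ) := by
  intro x
  rcases eq_or_ne ([] : List ℕ) x with h | h
  · exact Or.inl h
  · exact Or.inr ⟨List.nil_prefix, h⟩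

lemma btree_leaf_nil : btree.leaf ([] : List ℕ) = Set.univ := by
  ext f
  simp only [Set.mem_univ, iff_true]
  intro i hi
  exact absurd hi (Nat.not_lt_zero i)

lemma cyl_subset {p : N} {U : Set N} (hU : U ∈ nhds p) : ∃ n, PiNat.cylinder p n ⊆ U := by
  rw [(PiNat.isTopologicalBasis_cylinders (fun _ : ℕ => ℕ)).mem_nhds_iff] at hU
  obtain ⟨t, ⟨x, n, rfl⟩, hpt, htU⟩ := hU
  refine ⟨n, fun f hf => htU ?_⟩
  intro i hi
  rw [hf i hi]
  exact hpt i hi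

lemma getD_ofn (p : N) (n : ℕ) {i : ℕ} (hi : i < n) :
    (List.ofFn (fun j : Fin n => p j)).getD i 0 = p i := by
  rw [List.getD_eq_getElem _ _ (by simpa using hi)]
  simp

lemma bleaf_ofn (p : N) (n : ℕ) :
    bleaf (List.ofFn (fun j : Fin n => p j)) = PiNat.cylinder p n := by
  ext f
  simp only [bleaf, PiNat.cylinder, Set.mem_setOf_eq, List.length_ofFn]
  exact ⟨fun h i hi => (h i hi).trans (getD_ofn p n hi),
    fun h i hi => (h i hi).trans (getD_ofn p n hi).symm⟩

lemma shoot_refines {v : List ℕ} {U : Set N} (hne : (bleaf v).Nonempty)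
    (hsub : bleaf v ⊆ U) : PiRefines (btree.shoot v) {U} := by
  intro D hD _
  rw [Set.mem_singleton_iff] at hD
  subst hD
  exact ⟨bleaf v, ⟨btree.Sons v, Set.Subset.rfl, by simp, bleaf_eq_union v⟩, hne, hsub⟩

lemma btree_grows : btree.GrowsInto := by
  intro p U hU
  obtain ⟨n, hn⟩ := cyl_subset hU
  have hp : p ∈ bleaf (List.ofFn (fun j : Fin n => p j)) := by
    rw [bleaf_ofn]
    exact PiNat.self_mem_cylinder p n
  exact ⟨List.ofFn (fun j : Fin n => p j), hp,
    shoot_refines ⟨p, hp⟩ (by rw [bleaf_ofn]; exact hn)⟩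

end BairePi

/-- The Baire space `ω^ω` has a π-tree whose Rise family is π-refined by the
cofinite subsets of `ω`. -/
theorem baireSpace_has_piTree_with_cofinite_rise :
    ∃ F : FoliageTree (ℕ → ℕ), F.IsPiTree ∧ PiRefines (cofin Set.univ) F.Rise := by
  refine ⟨BairePi.btree, ⟨⟨BairePi.btree_open, BairePi.btree_locallyStrict,
    ⟨RelIso.refl seqLT⟩, BairePi.btree_strict,
    ⟨([] : List ℕ), BairePi.btree_root, BairePi.btree_leaf_nil⟩⟩, BairePi.btree_grows⟩, ?_⟩
  intro R hR _
  obtain ⟨p, U, hU, rfl⟩ := hR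
  obtain ⟨n₀, hn₀⟩ := BairePi.cyl_subset hU
  refine ⟨Set.univ \ ↑(Finset.range n₀),
    ⟨↑(Finset.range n₀), (Finset.range n₀).finite_toSet, Set.subset_univ _, rfl⟩,
    ⟨n₀, by simp⟩, ?_⟩
  intro n hn
  simp only [Set.mem_diff, Set.mem_univ, true_and, Finset.coe_range, Set.mem_Iio,
    not_lt] at hn
  have hp : p ∈ BairePi.bleaf (List.ofFn (fun j : Fin n => p j)) := by
    rw [BairePi.bleaf_ofn]
    exact PiNat.self_mem_cylinder p n
  refine ⟨List.ofFn (fun j : Fin n => p j), hp, ?_, ?_⟩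
  · refine BairePi.shoot_refines ⟨p, hp⟩ ?_
    rw [BairePi.bleaf_ofn]
    exact (PiNat.cylinder_anti p hn).trans hn₀
  · rw [BairePi.btree_height]
    simp
end

section
/- The Sorgenfrey line R_S has a π-tree G such that cofin(ω) ≫ Rise_G(R_S). -/
open Set

universe u v

/-- The Sorgenfrey line: the reals with the topology generated by the
half-open intervals `[a, b)`. -/
def SorgLine : Type := ℝ

instance : TopologicalSpace SorgLine :=
  TopologicalSpace.generateFrom {s : Set ℝ | ∃ a b : ℝ, s = Set.Ico a b}


noncomputable def zof (k : ℕ) : ℝ := ((Denumerable.eqv ℤ).symm k : ℤ)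

lemma zof_inj : Function.Injective zof := by
  intro a b h
  have : ((Denumerable.eqv ℤ).symm a : ℤ) = (Denumerable.eqv ℤ).symm b :=
    Int.cast_injective h
  simpa using (Denumerable.eqv ℤ).symm.injective this

noncomputable def child (q : ℝ × ℝ) (k : ℕ) : ℝ × ℝ :=
  (q.2 - (q.2 - q.1) * (1/2)^k, q.2 - (q.2 - q.1) * (1/2)^(k+1))

lemma half_pow_pos (k : ℕ) : (0:ℝ) < (1/2)^k := by positivity

lemma half_pow_lt (k : ℕ) : ((1:ℝ)/2)^(k+1) < (1/2)^k := by
  have := pow_lt_pow_right_of_lt_one₀ (by norm_num : (0:ℝ) < 1/2) (by norm_num : (1:ℝ)/2 < 1)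
    (Nat.lt_succ_self k)
  simpa using this

lemma half_pow_le {m k : ℕ} (h : m ≤ k) : ((1:ℝ)/2)^k ≤ (1/2)^m :=
  pow_le_pow_of_le_one (by norm_num) (by norm_num) h

lemma child_fst_lt_snd {q : ℝ × ℝ} (h : q.1 < q.2) (k : ℕ) :
    (child q k).1 < (child q k).2 := by
  have h1 := half_pow_lt k
  have h2 : (0:ℝ) < q.2 - q.1 := by linarith
  have := mul_lt_mul_of_pos_left h1 h2
  simp only [child]; linarith

lemma child_fst_ge {q : ℝ × ℝ} (h : q.1 < q.2) (k : ℕ) : q.1 ≤ (child q k).1 := by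
  have h1 : ((1:ℝ)/2)^k ≤ 1 := pow_le_one₀ (by norm_num) (by norm_num)
  have h2 : (0:ℝ) < q.2 - q.1 := by linarith
  have := mul_le_mul_of_nonneg_left h1 h2.le
  simp only [child]; nlinarith

lemma child_snd_lt {q : ℝ × ℝ} (h : q.1 < q.2) (k : ℕ) : (child q k).2 < q.2 := by
  have h1 := half_pow_pos (k+1)
  have h2 : (0:ℝ) < q.2 - q.1 := by linarith
  have := mul_pos h2 h1
  simp only [child]; linarith

lemma child_len {q : ℝ × ℝ} (k : ℕ) :
    (child q k).2 - (child q k).1 = (q.2 - q.1) * (1/2)^(k+1) := by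
  simp only [child]; ring

lemma child_len_le {q : ℝ × ℝ} (h : q.1 < q.2) (k : ℕ) :
    (child q k).2 - (child q k).1 ≤ (q.2 - q.1) * (1/2) := by
  rw [child_len]
  have h2 : (0:ℝ) < q.2 - q.1 := by linarith
  have h1 : ((1:ℝ)/2)^(k+1) ≤ (1/2)^1 := half_pow_le (by omega)
  nlinarith

lemma mem_child_iff {q : ℝ × ℝ} {x : ℝ} (k : ℕ) :
    x ∈ Ico (child q k).1 (child q k).2 ↔
      (q.2 - q.1) * (1/2)^(k+1) < q.2 - x ∧ q.2 - x ≤ (q.2 - q.1) * (1/2)^k := by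
  simp only [child, mem_Ico]
  constructor <;> rintro ⟨h1, h2⟩ <;> constructor <;> linarith

lemma exists_scale {L d : ℝ} (hL : 0 < L) (m : ℕ) (hd0 : 0 < d) (hdm : d ≤ L * (1/2)^m) :
    ∃ k, m ≤ k ∧ L * (1/2)^(k+1) < d ∧ d ≤ L * (1/2)^k := by
  have hex : ∃ n, L * (1/2)^n < d := by
    obtain ⟨n, hn⟩ := exists_pow_lt_of_lt_one (x := d / L) (by positivity)
      (by norm_num : (1:ℝ)/2 < 1)
    exact ⟨n, by rwa [lt_div_iff₀ hL, mul_comm] at hn⟩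
  classical
  let n0 := Nat.find hex
  have hn0 : L * (1/2)^n0 < d := Nat.find_spec hex
  have hmn : m < n0 := by
    by_contra hc
    push_neg at hc
    have : L * (1/2)^m ≤ L * (1/2)^n0 :=
      mul_le_mul_of_nonneg_left (half_pow_le hc) hL.le
    linarith
  refine ⟨n0 - 1, by omega, ?_, ?_⟩
  · have : n0 - 1 + 1 = n0 := by omega
    rw [this]; exact hn0
  · have hlt : n0 - 1 < n0 := by omega
    have := Nat.find_min hex hlt
    push_neg at this
    exact this

lemma child_cover {q : ℝ × ℝ} (h : q.1 < q.2) (m : ℕ) :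
    (⋃ k ∈ {k : ℕ | m ≤ k}, Ico (child q k).1 (child q k).2)
      = Ico (q.2 - (q.2 - q.1) * (1/2)^m) q.2 := by
  have hL : (0:ℝ) < q.2 - q.1 := by linarith
  ext x
  simp only [mem_iUnion, mem_setOf_eq, exists_prop]
  rw [mem_Ico]
  constructor
  · rintro ⟨k, hk, hx⟩
    rw [mem_child_iff] at hx
    constructor
    · have : (q.2 - q.1) * (1/2)^k ≤ (q.2 - q.1) * (1/2)^m :=
        mul_le_mul_of_nonneg_left (half_pow_le hk) hL.le
      linarith [hx.2]
    · have := half_pow_pos (k+1)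
      nlinarith [hx.1]
  · rintro ⟨h1, h2⟩
    obtain ⟨k, hk, ha, hb⟩ := exists_scale hL m (by linarith : (0:ℝ) < q.2 - x) (by linarith)
    exact ⟨k, hk, (mem_child_iff k).2 ⟨ha, hb⟩⟩

lemma child_disjoint {q : ℝ × ℝ} (h : q.1 < q.2) {k j : ℕ} (hkj : k ≠ j) :
    Disjoint (Ico (child q k).1 (child q k).2) (Ico (child q j).1 (child q j).2) := by
  rw [Set.disjoint_left]
  intro x hk hj
  rw [mem_child_iff] at hk hj
  have hL : (0:ℝ) < q.2 - q.1 := by linarith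
  rcases Nat.lt_or_ge k j with hc | hc
  · have : (q.2 - q.1) * (1/2)^j ≤ (q.2 - q.1) * (1/2)^(k+1) :=
      mul_le_mul_of_nonneg_left (half_pow_le hc) hL.le
    linarith [hk.1, hj.2]
  · have hlt : j < k := lt_of_le_of_ne hc (Ne.symm hkj)
    have : (q.2 - q.1) * (1/2)^k ≤ (q.2 - q.1) * (1/2)^(j+1) :=
      mul_le_mul_of_nonneg_left (half_pow_le hlt) hL.le
    linarith [hj.1, hk.2]


section Construction
open FoliageTree

noncomputable def iv : List ℕ → ℝ × ℝ
  | [] => (0, 1)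
  | k :: l => l.foldl child (zof k, zof k + 1)

lemma iv_append {v : List ℕ} (hv : v ≠ []) (k : ℕ) : iv (v ++ [k]) = child (iv v) k := by
  cases v with
  | nil => exact absurd rfl hv
  | cons a l => simp [iv, List.foldl_append]

lemma foldl_child_lt {q : ℝ × ℝ} (h : q.1 < q.2) : ∀ l : List ℕ,
    (l.foldl child q).1 < (l.foldl child q).2 := by
  intro l
  induction l generalizing q with
  | nil => exact h
  | cons k l ih => exact ih (child_fst_lt_snd h k)

lemma iv_lt {v : List ℕ} (hv : v ≠ []) : (iv v).1 < (iv v).2 := by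
  cases v with
  | nil => exact absurd rfl hv
  | cons a l => exact foldl_child_lt (by simp) l

lemma iv_len_le : ∀ v : List ℕ, v ≠ [] → (iv v).2 - (iv v).1 ≤ (1/2)^(v.length - 1) := by
  intro v
  induction v using List.reverseRecOn with
  | nil => intro h; exact absurd rfl h
  | append_singleton w k ih =>
    intro _
    cases w with
    | nil => simp [iv]
    | cons a l =>
      have hw : (a :: l) ≠ [] := by simp
      have h1 := ih hw
      have h2 : (iv ((a :: l) ++ [k])).2 - (iv ((a :: l) ++ [k])).1
          ≤ ((iv (a :: l)).2 - (iv (a :: l)).1) * (1/2) := by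
        rw [iv_append hw]
        exact child_len_le (iv_lt hw) k
      have h3 : ((a :: l) ++ [k]).length - 1 = (a :: l).length := by simp
      rw [h3]
      have h4 : ((1:ℝ)/2)^((a :: l).length) = (1/2)^((a :: l).length - 1) * (1/2) := by
        rw [← pow_succ]
        congr 1
      rw [h4]
      nlinarith [iv_lt hw, half_pow_pos ((a :: l).length - 1)]

noncomputable def lf (v : List ℕ) : Set ℝ :=
  if v = [] then Set.univ else Set.Ico (iv v).1 (iv v).2

lemma lf_nil : lf [] = Set.univ := rfl

lemma lf_ne {v : List ℕ} (hv : v ≠ []) : lf v = Set.Ico (iv v).1 (iv v).2 := if_neg hv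

lemma lf_cover (v : List ℕ) : lf v = ⋃ k : ℕ, lf (v ++ [k]) := by
  cases v with
  | nil =>
    rw [lf_nil]
    ext x
    simp only [Set.mem_univ, Set.mem_iUnion, true_iff]
    refine ⟨Denumerable.eqv ℤ ⌊x⌋, ?_⟩
    have hz : zof (Denumerable.eqv ℤ ⌊x⌋) = (⌊x⌋ : ℝ) := by simp [zof]
    rw [show ([] : List ℕ) ++ [Denumerable.eqv ℤ ⌊x⌋] = [Denumerable.eqv ℤ ⌊x⌋] from rfl,
      lf_ne (by simp)]
    have : iv [Denumerable.eqv ℤ ⌊x⌋] = (zof (Denumerable.eqv ℤ ⌊x⌋), zof (Denumerable.eqv ℤ ⌊x⌋) + 1) := rfl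
    rw [this, hz]
    exact ⟨Int.floor_le x, Int.lt_floor_add_one x⟩
  | cons a l =>
    have hv : (a :: l) ≠ [] := by simp
    have hlt := iv_lt hv
    have := child_cover hlt 0
    rw [lf_ne hv]
    have hrw : Set.Ico ((iv (a::l)).2 - ((iv (a::l)).2 - (iv (a::l)).1) * (1/2)^0) (iv (a::l)).2
        = Set.Ico (iv (a::l)).1 (iv (a::l)).2 := by norm_num
    rw [← hrw, ← this]
    ext x
    simp only [Set.mem_iUnion, Set.mem_setOf_eq, exists_prop]
    constructor
    · rintro ⟨k, _, hk⟩
      refine ⟨k, ?_⟩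
      rw [lf_ne (by simp), iv_append hv]
      exact hk
    · rintro ⟨k, hk⟩
      rw [lf_ne (by simp), iv_append hv] at hk
      exact ⟨k, Nat.zero_le k, hk⟩

lemma lf_disj (v : List ℕ) {k j : ℕ} (hkj : k ≠ j) : Disjoint (lf (v ++ [k])) (lf (v ++ [j])) := by
  cases v with
  | nil =>
    rw [show ([] : List ℕ) ++ [k] = [k] from rfl, show ([] : List ℕ) ++ [j] = [j] from rfl,
      lf_ne (by simp), lf_ne (by simp)]
    have hk : iv [k] = (zof k, zof k + 1) := rfl
    have hj : iv [j] = (zof j, zof j + 1) := rfl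
    rw [hk, hj]
    rw [Set.disjoint_left]
    intro x hxk hxj
    simp only [Set.mem_Ico] at hxk hxj
    have hne : zof k ≠ zof j := fun h => hkj (zof_inj h)
    have : ∀ a b : ℤ, (a : ℝ) ≠ b → ¬((a:ℝ) ≤ x ∧ x < a + 1 ∧ (b:ℝ) ≤ x ∧ x < b + 1) := by
      intro a b hab ⟨h1, h2, h3, h4⟩
      have : a ≠ b := fun h => hab (by exact_mod_cast h)
      rcases lt_or_gt_of_ne this with h | h
      · have : (a:ℝ) + 1 ≤ b := by exact_mod_cast Int.add_one_le_iff.mpr h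
        linarith
      · have : (b:ℝ) + 1 ≤ a := by exact_mod_cast Int.add_one_le_iff.mpr h
        linarith
    exact this _ _ hne ⟨hxk.1, hxk.2, hxj.1, hxj.2⟩
  | cons a l =>
    have hv : (a :: l) ≠ [] := by simp
    rw [lf_ne (by simp), lf_ne (by simp), iv_append hv, iv_append hv]
    exact child_disjoint (iv_lt hv) hkj

lemma lf_tail {v : List ℕ} (hv : v ≠ []) (m : ℕ) :
    (⋃ k ∈ {k : ℕ | m ≤ k}, lf (v ++ [k]))
      = Set.Ico ((iv v).2 - ((iv v).2 - (iv v).1) * (1/2)^m) (iv v).2 := by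
  rw [← child_cover (iv_lt hv) m]
  ext x
  simp only [Set.mem_iUnion, Set.mem_setOf_eq, exists_prop]
  constructor
  · rintro ⟨k, hk, hx⟩
    rw [lf_ne (by simp), iv_append hv] at hx
    exact ⟨k, hk, hx⟩
  · rintro ⟨k, hk, hx⟩
    refine ⟨k, hk, ?_⟩
    rw [lf_ne (by simp), iv_append hv]
    exact hx

lemma seqLT_length {a b : List ℕ} (h : seqLT a b) : a.length < b.length := by
  rcases h with ⟨hp, hne⟩
  rcases lt_or_eq_of_le hp.length_le with h | h
  · exact h
  · exact absurd (hp.eq_of_length h) hne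

lemma seqLT_irrefl (a : List ℕ) : ¬ seqLT a a := fun h => h.2 rfl

lemma seqLT_trans {a b c : List ℕ} (hab : seqLT a b) (hbc : seqLT b c) : seqLT a c := by
  refine ⟨hab.1.trans hbc.1, fun h => ?_⟩
  subst h
  have := seqLT_length hab
  have := seqLT_length hbc
  omega

lemma seqLT_of_prefix_lt {v a b : List ℕ} (ha : a <+: v) (hb : b <+: v)
    (h : a.length < b.length) : seqLT a b := by
  rw [List.prefix_iff_eq_take] at ha hb
  constructor
  · have h2 : a = List.take a.length (List.take b.length v) := by
      rw [List.take_take, min_eq_left (by omega : a.length ≤ b.length)]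
      exact ha
    rw [h2, ← hb]
    exact List.take_prefix _ _
  · intro heq
    rw [heq] at h
    omega

lemma seqLT_trichot {v a b : List ℕ} (ha : a <+: v) (hb : b <+: v) :
    seqLT a b ∨ a = b ∨ seqLT b a := by
  rcases lt_trichotomy a.length b.length with h | h | h
  · exact Or.inl (seqLT_of_prefix_lt ha hb h)
  · rw [List.prefix_iff_eq_take] at ha hb
    right; left
    rw [ha, hb, h]
  · exact Or.inr (Or.inr (seqLT_of_prefix_lt hb ha h))

lemma seqLT_wf : WellFounded (seqLT) := by
  have : Subrelation seqLT (InvImage (· < ·) (List.length (α := ℕ))) := by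
    intro a b h
    exact seqLT_length h
  exact Subrelation.wf this (InvImage.wf _ (Nat.lt_wfRel.wf))

lemma seqLT_wellOrdered (v : List ℕ) :
    IsWellOrder {b : List ℕ // seqLT b v} fun x y => seqLT x.1 y.1 := by
  haveI h1 : IsTrichotomous {b : List ℕ // seqLT b v} (fun x y => seqLT x.1 y.1) := by
    constructor
    intro x y hxy hyx
    rcases seqLT_trichot x.2.1 y.2.1 with h | h | h
    · exact absurd h hxy
    · exact Subtype.ext h
    · exact absurd h hyx
  haveI h2 : IsTrans {b : List ℕ // seqLT b v} (fun x y => seqLT x.1 y.1) := by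
    constructor
    intro x y z hxy hyz
    exact seqLT_trans hxy hyz
  haveI h3 : IsWellFounded {b : List ℕ // seqLT b v} (fun x y => seqLT x.1 y.1) := by
    constructor
    have : Subrelation (fun (x y : {b : List ℕ // seqLT b v}) => seqLT x.1 y.1)
        (InvImage seqLT (Subtype.val)) := fun h => h
    exact Subrelation.wf this (InvImage.wf _ seqLT_wf)
  exact ⟨⟩

noncomputable def G0 : FoliageTree SorgLine where
  Node := List ℕ
  lt := seqLT
  lt_irrefl := seqLT_irrefl
  lt_trans := seqLT_trans
  wellOrdered := seqLT_wellOrdered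
  leaf := lf

lemma G0_node : G0.Node = List ℕ := rfl
lemma G0_lt : G0.lt = seqLT := rfl
lemma G0_leaf : G0.leaf = lf := rfl

lemma seqLT_append (v : List ℕ) (k : ℕ) : seqLT v (v ++ [k]) :=
  ⟨⟨[k], rfl⟩, by simp⟩

lemma G0_sons (v : List ℕ) : G0.Sons v = Set.range (fun k : ℕ => v ++ [k]) := by
  ext s
  simp only [FoliageTree.Sons, Set.mem_setOf_eq, Set.mem_range, G0_lt]
  constructor
  · rintro ⟨h1, h2⟩
    have hlen : v.length < s.length := seqLT_length h1
    by_cases hc : s.length = v.length + 1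
    · obtain ⟨t, ht⟩ := h1.1
      have : t.length = 1 := by
        have := congrArg List.length ht
        simp at this
        omega
      obtain ⟨k, rfl⟩ := List.length_eq_one_iff.1 this
      exact ⟨k, ht⟩
    · exfalso
      apply h2
      refine ⟨s.take (v.length + 1), ?_, ?_⟩
      · exact seqLT_of_prefix_lt h1.1 (List.take_prefix _ _)
          (by erw [List.length_take]; omega)
      · refine ⟨List.take_prefix _ _, ?_⟩
        intro heq
        have := congrArg List.length heq
        erw [List.length_take] at this
        omega
  · rintro ⟨k, rfl⟩
    refine ⟨seqLT_append v k, ?_⟩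
    rintro ⟨t, h1, h2⟩
    have l1 := seqLT_length h1
    have l2 := seqLT_length h2
    simp at l2
    omega

noncomputable def predIso (v : List ℕ) :
    (fun (x y : {b : List ℕ // seqLT b v}) => seqLT x.1 y.1) ≃r
      (fun (i j : Fin v.length) => i < j) where
  toFun x := ⟨x.1.length, seqLT_length x.2⟩
  invFun i := ⟨v.take i, List.take_prefix _ _, by
    intro heq
    have := congrArg List.length heq
    rw [List.length_take] at this
    omega⟩
  left_inv x := by
    apply Subtype.ext
    exact (List.prefix_iff_eq_take.1 x.2.1).symm
  right_inv i := by
    apply Fin.ext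
    simp only [List.length_take]
    omega
  map_rel_iff' := by
    intro x y
    simp only [Equiv.coe_fn_mk, Fin.mk_lt_mk]
    constructor
    · intro h
      exact seqLT_of_prefix_lt x.2.1 y.2.1 h
    · intro h
      exact seqLT_length h

lemma G0_height (v : List ℕ) : G0.height v = (v.length : Ordinal) := by
  haveI := seqLT_wellOrdered v
  haveI : IsWellOrder (Fin v.length) (fun i j => i < j) :=
    (inferInstance : IsWellOrder (Fin v.length) (· < ·))
  have key : @Ordinal.type {b : List ℕ // seqLT b v} (fun x y => seqLT x.1 y.1) _
      = (v.length : Ordinal) := by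
    rw [Ordinal.type_eq.2 ⟨predIso v⟩]
    have : @Ordinal.type (Fin v.length) (fun i j => i < j) _
        = @Ordinal.type (Fin v.length) (· < ·) _ := rfl
    rw [this, Ordinal.type_fintype]
    simp
  exact key

def toS (s : Set ℝ) : Set SorgLine := s

def toR (p : SorgLine) : ℝ := p

lemma sorg_isOpen_Ico (a b : ℝ) : IsOpen (toS (Set.Ico a b)) :=
  TopologicalSpace.GenerateOpen.basic _ ⟨a, b, rfl⟩

lemma G0_openIn : G0.OpenIn := by
  intro v
  show IsOpen (toS (lf v))
  by_cases hv : v = []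
  · rw [hv, lf_nil]; exact isOpen_univ
  · rw [lf_ne hv]; exact sorg_isOpen_Ico _ _

lemma genOpen_Ico {t : Set ℝ}
    (ht : TopologicalSpace.GenerateOpen {s : Set ℝ | ∃ a b : ℝ, s = Set.Ico a b} t) :
    ∀ p ∈ t, ∃ ε > 0, Set.Ico p (p + ε) ⊆ t := by
  induction ht with
  | basic s hs =>
    rintro p hp
    obtain ⟨a, b, rfl⟩ := hs
    rw [Set.mem_Ico] at hp
    refine ⟨b - p, by linarith, fun x hx => ?_⟩
    rw [Set.mem_Ico] at hx ⊢
    constructor <;> [linarith [hx.1]; linarith [hx.2]]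
  | univ => exact fun p _ => ⟨1, one_pos, Set.subset_univ _⟩
  | inter s t _ _ ihs iht =>
    rintro p ⟨hps, hpt⟩
    obtain ⟨ε₁, hε₁, h₁⟩ := ihs p hps
    obtain ⟨ε₂, hε₂, h₂⟩ := iht p hpt
    refine ⟨min ε₁ ε₂, lt_min hε₁ hε₂, fun x hx => ?_⟩
    rw [Set.mem_Ico] at hx
    constructor
    · exact h₁ ⟨hx.1, by have := min_le_left ε₁ ε₂; linarith [hx.2]⟩
    · exact h₂ ⟨hx.1, by have := min_le_right ε₁ ε₂; linarith [hx.2]⟩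
  | sUnion S _ ih =>
    rintro p ⟨s, hsS, hps⟩
    obtain ⟨ε, hε, h⟩ := ih s hsS p hps
    exact ⟨ε, hε, h.trans (Set.subset_sUnion_of_mem hsS)⟩

lemma sorg_nhds {p : SorgLine} {U : Set SorgLine} (h : U ∈ nhds p) :
    ∃ ε > 0, toS (Set.Ico (toR p) (toR p + ε)) ⊆ U := by
  rw [mem_nhds_iff] at h
  obtain ⟨t, htU, ht, hpt⟩ := h
  have ht' : TopologicalSpace.GenerateOpen {s : Set ℝ | ∃ a b : ℝ, s = Set.Ico a b} t := ht
  obtain ⟨ε, hε, hsub⟩ := genOpen_Ico ht' (toR p) hpt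
  exact ⟨ε, hε, fun x hx => htU (hsub hx)⟩

lemma G0_not_max (v : List ℕ) : ¬ G0.IsMaxNode v := by
  intro h
  exact h ⟨v ++ [0], seqLT_append v 0⟩

lemma G0_locallyStrict : G0.LocallyStrict := by
  intro v _
  constructor
  · show lf v = ⋃ s ∈ G0.Sons v, lf s
    erw [G0_sons, Set.biUnion_range]
    exact lf_cover v
  · intro s hs t ht hst
    erw [G0_sons] at hs ht
    obtain ⟨k, rfl⟩ := hs
    obtain ⟨j, rfl⟩ := ht
    have hkj : k ≠ j := fun h => hst (by rw [h])
    exact lf_disj v hkj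

lemma G0_root : G0.IsRoot [] := by
  intro x
  rcases eq_or_ne ([] : List ℕ) x with h | h
  · exact Or.inl h
  · exact Or.inr ⟨List.nil_prefix, h⟩

lemma G0_omegaOmega : G0.IsOmegaOmegaTree := ⟨RelIso.refl seqLT⟩

lemma branch_mem_of_lt {B : Set (List ℕ)} (hB : G0.IsBranch B) {u v : List ℕ}
    (hv : v ∈ B) (huv : seqLT u v) : u ∈ B := by
  have key : ∀ w ∈ B, seqLT u w ∨ u = w ∨ seqLT w u := by
    intro w hw
    rcases hB.1 w hw v hv with h | h | h
    · rcases seqLT_trichot (huv.1) (h.1) with h' | h' | h'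
      · exact Or.inl h'
      · exact Or.inr (Or.inl h')
      · exact Or.inr (Or.inr h')
    · subst h; exact Or.inl huv
    · exact Or.inl (seqLT_trans huv h)
  have key2 : ∀ w ∈ insert u B, seqLT u w ∨ u = w ∨ seqLT w u := by
    intro w hw
    rcases Set.mem_insert_iff.1 hw with hw | hw
    · exact Or.inr (Or.inl hw.symm)
    · exact key w hw
  have hc : G0.IsChainN (insert u B) := by
    intro x hx y hy
    rcases eq_or_ne x u with hxu | hxu
    · rw [hxu]; exact key2 y hy
    rcases eq_or_ne y u with hyu | hyu
    · rw [hyu]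
      rcases key2 x hx with h | h | h
      · exact Or.inr (Or.inr h)
      · exact Or.inr (Or.inl h.symm)
      · exact Or.inl h
    · exact hB.1 x ((Set.mem_insert_iff.1 hx).resolve_left hxu)
        y ((Set.mem_insert_iff.1 hy).resolve_left hyu)
  have := hB.2 _ hc (Set.subset_insert _ _)
  rw [this]
  exact Set.mem_insert u B

lemma branch_nil_mem {B : Set (List ℕ)} (hB : G0.IsBranch B) : ([] : List ℕ) ∈ B := by
  have hne : B.Nonempty := by
    rcases Set.eq_empty_or_nonempty B with h | h
    · exfalso
      have hc : G0.IsChainN {([] : List ℕ)} := by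
        intro x hx y hy
        erw [Set.mem_singleton_iff] at hx hy
        subst hx; subst hy
        exact Or.inr (Or.inl rfl)
      have := hB.2 _ hc (h ▸ Set.empty_subset _)
      rw [h] at this
      exact (Set.singleton_nonempty ([] : List ℕ)).ne_empty this.symm
    · exact h
  obtain ⟨v, hv⟩ := hne
  rcases eq_or_ne ([] : List ℕ) v with h | h
  · exact h ▸ hv
  · exact branch_mem_of_lt hB hv ⟨List.nil_prefix, h⟩

lemma branch_exists_len {B : Set (List ℕ)} (hB : G0.IsBranch B) :
    ∀ n : ℕ, ∃ w ∈ B, w.length = n := by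
  intro n
  induction n with
  | zero => exact ⟨[], branch_nil_mem hB, rfl⟩
  | succ n ih =>
    obtain ⟨w, hw, hl⟩ := ih
    have hsucc : ∃ w' ∈ B, seqLT w w' := by
      by_contra hc
      push_neg at hc
      have hchain : G0.IsChainN (insert (w ++ [0]) B) := by
        intro x hx y hy
        have comp : ∀ u ∈ B, seqLT u (w ++ [0]) ∨ u = w ++ [0] ∨ seqLT (w ++ [0]) u := by
          intro u hu
          rcases hB.1 u hu w hw with h | h | h
          · exact Or.inl (seqLT_trans h (seqLT_append w 0))
          · subst h; exact Or.inl (seqLT_append u 0)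
          · exact absurd h (hc u hu)
        have comp2 : ∀ u ∈ insert (w ++ [0]) B,
            seqLT u (w ++ [0]) ∨ u = w ++ [0] ∨ seqLT (w ++ [0]) u := by
          intro u hu
          rcases Set.mem_insert_iff.1 hu with hu | hu
          · exact Or.inr (Or.inl hu)
          · exact comp u hu
        rcases eq_or_ne x (w ++ [0]) with hxu | hxu
        · rw [hxu]
          rcases comp2 y hy with h | h | h
          · exact Or.inr (Or.inr h)
          · exact Or.inr (Or.inl h.symm)
          · exact Or.inl h
        rcases eq_or_ne y (w ++ [0]) with hyu | hyu
        · rw [hyu]; exact comp2 x hx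
        · exact hB.1 x ((Set.mem_insert_iff.1 hx).resolve_left hxu)
            y ((Set.mem_insert_iff.1 hy).resolve_left hyu)
      have heq := hB.2 _ hchain (Set.subset_insert _ _)
      have : w ++ [0] ∈ B := by rw [heq]; exact Set.mem_insert _ _
      exact (hc _ this) (seqLT_append w 0)
    obtain ⟨w', hw', hww'⟩ := hsucc
    have hlen : n + 1 ≤ w'.length := by
      have := seqLT_length hww'
      omega
    refine ⟨w'.take (n+1), ?_, by rw [List.length_take]; omega⟩
    rcases eq_or_ne (w'.take (n+1)) w' with h | h
    · rw [h]; exact hw'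
    · exact branch_mem_of_lt hB hw' ⟨List.take_prefix _ _, h⟩

lemma branch_unique_len {B : Set (List ℕ)} (hB : G0.IsBranch B) {w w' : List ℕ}
    (hw : w ∈ B) (hw' : w' ∈ B) (hl : w.length = w'.length) : w = w' := by
  rcases hB.1 w hw w' hw' with h | h | h
  · exact absurd (seqLT_length h) (by omega)
  · exact h
  · exact absurd (seqLT_length h) (by omega)

lemma G0_strictBranches : G0.StrictBranches := by
  refine ⟨⟨[]⟩, ?_⟩
  intro B hB
  choose f hfB hflen using branch_exists_len hB
  have hBf : B = Set.range f := by
    ext w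
    constructor
    · intro hw
      exact ⟨w.length, (branch_unique_len hB (hfB w.length) hw (hflen w.length)).symm ▸ rfl⟩
    · rintro ⟨n, rfl⟩
      exact hfB n
  have hfne : ∀ n, f (n+1) ≠ [] := by
    intro n h
    have := hflen (n+1)
    rw [h] at this
    simp at this
  have hstep : ∀ n, ∃ k, f (n+2) = f (n+1) ++ [k] := by
    intro n
    have h1 : seqLT (f (n+1)) (f (n+2)) := by
      rcases hB.1 _ (hfB (n+1)) _ (hfB (n+2)) with h | h | h
      · exact h
      · exfalso; have := congrArg List.length h; rw [hflen, hflen] at this; omega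
      · exfalso; have := seqLT_length h; rw [hflen, hflen] at this; omega
    obtain ⟨t, ht⟩ := h1.1
    have hlt : t.length = 1 := by
      have := congrArg List.length ht
      rw [List.length_append, hflen, hflen] at this
      omega
    obtain ⟨k, rfl⟩ := List.length_eq_one_iff.1 hlt
    exact ⟨k, ht.symm⟩
  set a : ℕ → ℝ := fun n => (iv (f (n+1))).1 with ha
  set b : ℕ → ℝ := fun n => (iv (f (n+1))).2 with hb
  have hab : ∀ n, a n < b n := fun n => iv_lt (hfne n)
  have hstep' : ∀ n, a n ≤ a (n+1) ∧ b (n+1) < b n := by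
    intro n
    obtain ⟨k, hk⟩ := hstep n
    constructor
    · show (iv (f (n+1))).1 ≤ (iv (f (n+2))).1
      rw [hk, iv_append (hfne n)]
      exact child_fst_ge (hab n) k
    · show (iv (f (n+2))).2 < (iv (f (n+1))).2
      rw [hk, iv_append (hfne n)]
      exact child_snd_lt (hab n) k
  have hamono : Monotone a := monotone_nat_of_le_succ (fun n => (hstep' n).1)
  have hbanti : Antitone b := antitone_nat_of_succ_le (fun n => (hstep' n).2.le)
  have hcross : ∀ m n, a m < b n := by
    intro m n
    calc a m ≤ a (max m n) := hamono (le_max_left m n)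
    _ < b (max m n) := hab _
    _ ≤ b n := hbanti (le_max_right m n)
  have hlen : ∀ n, b n - a n ≤ (1/2)^n := by
    intro n
    have := iv_len_le (f (n+1)) (hfne n)
    rw [hflen (n+1)] at this
    simpa using this
  have hbdd : BddAbove (Set.range a) := by
    refine ⟨b 0, ?_⟩
    rintro x ⟨m, rfl⟩
    exact (hcross m 0).le
  set p : ℝ := ⨆ n, a n with hp
  have hap : ∀ n, a n ≤ p := fun n => le_ciSup hbdd n
  have hpb : ∀ n, p < b n := by
    intro n
    have h1 : p ≤ b (n+1) := ciSup_le (fun m => (hcross m (n+1)).le)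
    exact lt_of_le_of_lt h1 ((hstep' n).2.trans_le (le_refl _))
  refine ⟨p, ?_⟩
  ext x
  erw [Set.mem_iInter₂, Set.mem_singleton_iff]
  constructor
  · intro hx
    have hxn : ∀ n, a n ≤ toR x ∧ toR x < b n := by
      intro n
      have := hx (f (n+1)) (hfB (n+1))
      rw [show G0.leaf (f (n+1)) = lf (f (n+1)) from rfl, lf_ne (hfne n)] at this
      exact this
    have h1 : p ≤ toR x := ciSup_le (fun n => (hxn n).1)
    have h2 : toR x ≤ p := by
      by_contra hc
      push_neg at hc
      obtain ⟨n, hn⟩ := exists_pow_lt_of_lt_one (sub_pos.2 hc) (by norm_num : (1:ℝ)/2 < 1)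
      have := (hxn n).2
      have := hlen n
      have := hap n
      have : toR x < p + (1/2)^n := by linarith
      linarith
    show toR x = p
    exact le_antisymm h2 h1
  · intro hxp w hw
    have hweq : w = f w.length := branch_unique_len hB hw (hfB w.length) (hflen w.length).symm
    by_cases hwnil : w = []
    · rw [hwnil]
      show x ∈ lf []
      rw [lf_nil]
      trivial
    · have hl1 : 1 ≤ w.length := by
        rcases Nat.eq_zero_or_pos w.length with h | h
        · exact absurd (List.length_eq_zero_iff.1 h) hwnil
        · exact h
      have hweq2 : w = f (w.length - 1 + 1) := by
        have hfl : w.length - 1 + 1 = w.length := by omega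
        rw [hfl]
        exact hweq
      rw [hweq2]
      show x ∈ lf (f (w.length - 1 + 1))
      rw [lf_ne (hfne (w.length - 1))]
      show (iv (f (w.length - 1 + 1))).1 ≤ toR x ∧ toR x < (iv (f (w.length - 1 + 1))).2
      have hx' : toR x = p := hxp
      rw [hx']
      exact ⟨hap _, hpb _⟩

lemma exists_child_mem {v : List ℕ} {x : ℝ} (hx : x ∈ lf v) : ∃ k, x ∈ lf (v ++ [k]) := by
  rw [lf_cover v] at hx
  simpa using hx

noncomputable def bo (x : ℝ) : (n : ℕ) → {v : List ℕ // x ∈ lf v ∧ v.length = n}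
  | 0 => ⟨[], by rw [lf_nil]; trivial, rfl⟩
  | n+1 =>
    let w := bo x n
    ⟨w.1 ++ [Classical.choose (exists_child_mem w.2.1)],
      Classical.choose_spec (exists_child_mem w.2.1), by simp [w.2.2]⟩

lemma shoot_contains_tail {v : List ℕ} (hv : v ≠ []) (m : ℕ) :
    Set.Ico ((iv v).2 - ((iv v).2 - (iv v).1) * (1/2)^m) (iv v).2 ∈ G0.shoot v := by
  refine ⟨(fun k : ℕ => v ++ [k]) '' {k | m ≤ k}, ?_, ?_, ?_⟩
  · rw [G0_sons]
    exact Set.image_subset_range _ _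
  · apply Set.Finite.subset (Set.Finite.image (fun k : ℕ => v ++ [k]) (Set.finite_Iio m))
    rintro s ⟨hs, hsc⟩
    rw [G0_sons] at hs
    obtain ⟨k, rfl⟩ := hs
    refine ⟨k, ?_, rfl⟩
    show k < m
    by_contra h
    push_neg at h
    exact hsc ⟨k, h, rfl⟩
  · erw [Set.biUnion_image]
    exact (lf_tail hv m).symm

lemma shoot_refines {v : List ℕ} (hv : v ≠ []) {x : ℝ} (hx : x ∈ lf v) {U : Set SorgLine}
    (hU : toS (Set.Ico x ((iv v).2)) ⊆ U) : PiRefines (G0.shoot v) {U} := by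
  intro D hD _
  rw [Set.mem_singleton_iff] at hD
  subst hD
  have hab : (iv v).1 < (iv v).2 := iv_lt hv
  have hxm : (iv v).1 ≤ x ∧ x < (iv v).2 := by rwa [lf_ne hv] at hx
  have hd : (0:ℝ) < (iv v).2 - x := by linarith [hxm.2]
  obtain ⟨m, hm⟩ := exists_pow_lt_of_lt_one
    (div_pos hd (by linarith : (0:ℝ) < (iv v).2 - (iv v).1)) (by norm_num : (1:ℝ)/2 < 1)
  have hm' : ((iv v).2 - (iv v).1) * (1/2)^m < (iv v).2 - x := by
    rw [lt_div_iff₀ (by linarith : (0:ℝ) < (iv v).2 - (iv v).1)] at hm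
    calc ((iv v).2 - (iv v).1) * (1/2)^m = (1/2)^m * ((iv v).2 - (iv v).1) := by ring
    _ < (iv v).2 - x := hm
  refine ⟨toS (Set.Ico ((iv v).2 - ((iv v).2 - (iv v).1) * (1/2)^m) ((iv v).2)), shoot_contains_tail hv m, ?_, ?_⟩
  · refine ⟨(iv v).2 - ((iv v).2 - (iv v).1) * (1/2)^m, ?_⟩
    show (iv v).2 - ((iv v).2 - (iv v).1) * (1/2)^m ≤ _ ∧
      (iv v).2 - ((iv v).2 - (iv v).1) * (1/2)^m < (iv v).2
    constructor
    · exact le_refl _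
    · nlinarith [half_pow_pos m]
  · intro y hy
    apply hU
    have hy' : (iv v).2 - ((iv v).2 - (iv v).1) * (1/2)^m ≤ toR y ∧ toR y < (iv v).2 := hy
    show x ≤ toR y ∧ toR y < (iv v).2
    constructor
    · linarith [hy'.1]
    · exact hy'.2

lemma bo_refines {x : ℝ} {U : Set SorgLine} {ε : ℝ} (hε : 0 < ε)
    (hU : toS (Set.Ico x (x + ε)) ⊆ U) {n : ℕ} (hn : (1/2 : ℝ)^n < ε) :
    x ∈ lf ((bo x (n+1)).1) ∧ ((bo x (n+1)).1).length = n + 1 ∧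
      PiRefines (G0.shoot ((bo x (n+1)).1)) {U} := by
  obtain ⟨hxv, hlen⟩ := (bo x (n+1)).2
  set v := (bo x (n+1)).1
  have hvne : v ≠ [] := by
    intro h
    rw [h] at hlen
    simp at hlen
  refine ⟨hxv, hlen, ?_⟩
  apply shoot_refines hvne hxv
  have hxm : (iv v).1 ≤ x ∧ x < (iv v).2 := by rwa [lf_ne hvne] at hxv
  have hl : (iv v).2 - (iv v).1 ≤ (1/2)^n := by
    have := iv_len_le v hvne
    rw [hlen] at this
    simpa using this
  intro y hy
  apply hU
  have hy' : x ≤ toR y ∧ toR y < (iv v).2 := hy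
  show x ≤ toR y ∧ toR y < x + ε
  constructor
  · exact hy'.1
  · linarith [hy'.2, hxm.1, hxm.2]

lemma G0_growsInto : G0.GrowsInto := by
  intro p U hU
  obtain ⟨ε, hε, hsub⟩ := sorg_nhds hU
  obtain ⟨n, hn⟩ := exists_pow_lt_of_lt_one hε (by norm_num : (1:ℝ)/2 < 1)
  obtain ⟨hmem, _, href⟩ := bo_refines hε hsub hn
  exact ⟨(bo (toR p) (n+1)).1, hmem, href⟩

theorem sorgenfrey_has_piTree_with_cofinite_rise' :
    ∃ G : FoliageTree SorgLine, G.IsPiTree ∧ PiRefines (cofin Set.univ) G.Rise := by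
  refine ⟨G0, ⟨⟨G0_openIn, G0_locallyStrict, G0_omegaOmega, G0_strictBranches,
    ⟨[], G0_root, lf_nil⟩⟩, G0_growsInto⟩, ?_⟩
  rintro R ⟨p, U, hU, rfl⟩ _
  obtain ⟨ε, hε, hsub⟩ := sorg_nhds hU
  obtain ⟨n, hn⟩ := exists_pow_lt_of_lt_one hε (by norm_num : (1:ℝ)/2 < 1)
  refine ⟨{j : ℕ | n + 1 ≤ j}, ⟨{j : ℕ | j < n + 1}, Set.finite_Iio (n+1), Set.subset_univ _, ?_⟩,
    ⟨n+1, (by simp : (n+1) ∈ {j : ℕ | n + 1 ≤ j})⟩, ?_⟩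
  · ext j
    simp only [Set.mem_setOf_eq, Set.mem_diff, Set.mem_univ, true_and]
    omega
  · intro j hj
    rw [Set.mem_setOf_eq] at hj
    have hm : n ≤ j - 1 := by omega
    have hn' : (1/2 : ℝ)^(j-1) < ε :=
      lt_of_le_of_lt (half_pow_le hm) hn
    obtain ⟨hmem, hlen, href⟩ := bo_refines hε hsub hn'
    refine ⟨(bo (toR p) (j-1+1)).1, hmem, href, ?_⟩
    rw [G0_height, hlen]
    congr 1
    omega

-- AUX_MARKER

end Construction

/-- The Sorgenfrey line has a π-tree whose Rise family is π-refined by the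
cofinite subsets of `ω`. -/
theorem sorgenfrey_has_piTree_with_cofinite_rise :
    ∃ G : FoliageTree SorgLine, G.IsPiTree ∧ PiRefines (cofin Set.univ) G.Rise :=
  sorgenfrey_has_piTree_with_cofinite_rise'
end

section
/- If X ⊆ R_S and R_S \ X is at most countable, then the subspace X has a π-tree H such that cofin({2n+1 : n ∈ ω}) ≫ Rise_H(X). -/
open Set

universe u v

namespace PTaux

open Set

/-! ### Generic facts about the prefix tree on `List ℕ` -/

lemma seqLT_iff_len {a b : List ℕ} : seqLT a b ↔ a <+: b ∧ a.length < b.length := by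
  constructor
  · rintro ⟨h1, h2⟩
    exact ⟨h1, lt_of_le_of_ne h1.length_le (fun e => h2 (h1.eq_of_length e))⟩
  · rintro ⟨h1, h2⟩
    exact ⟨h1, fun e => by subst e; exact lt_irrefl _ h2⟩

lemma seqLT_trans {a b c : List ℕ} (h1 : seqLT a b) (h2 : seqLT b c) : seqLT a c := by
  rw [seqLT_iff_len] at *
  exact ⟨h1.1.trans h2.1, h1.2.trans h2.2⟩

lemma seqLT_of_prefix_lt {a b : List ℕ} (h : a <+: b) (hl : a.length < b.length) :
    seqLT a b := seqLT_iff_len.2 ⟨h, hl⟩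

lemma seqLT_append (u : List ℕ) (i : ℕ) : seqLT u (u ++ [i]) :=
  seqLT_of_prefix_lt (List.prefix_append u [i]) (by simp)

/-- two prefixes of the same list are comparable -/
lemma prefix_tricho {a b c : List ℕ} (ha : a <+: c) (hb : b <+: c) :
    seqLT a b ∨ a = b ∨ seqLT b a := by
  rcases List.prefix_or_prefix_of_prefix ha hb with h | h
  · rcases eq_or_ne a b with rfl | hne
    · exact Or.inr (Or.inl rfl)
    · exact Or.inl ⟨h, hne⟩
  · rcases eq_or_ne b a with rfl | hne
    · exact Or.inr (Or.inl rfl)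
    · exact Or.inr (Or.inr ⟨h, hne⟩)

/-- the tree with skeleton `(ω^{<ω}, ⊂)` and leaf assignment `L` -/
def mkTree (Y : Type) (L : List ℕ → Set Y) : FoliageTree Y where
  Node := List ℕ
  lt := seqLT
  lt_irrefl := fun a h => h.2 rfl
  lt_trans := fun h1 h2 => seqLT_trans h1 h2
  wellOrdered := by
    intro a
    have key : ∀ x y : {b : List ℕ // seqLT b a}, seqLT x.1 y.1 ↔ x.1.length < y.1.length := by
      intro x y
      constructor
      · exact fun h => (seqLT_iff_len.1 h).2
      · intro h
        rcases prefix_tricho x.2.1 y.2.1 with h' | h' | h'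
        · exact h'
        · exact absurd h (by rw [h']; exact lt_irrefl _)
        · exact absurd h (not_lt.2 (le_of_lt (seqLT_iff_len.1 h').2))
    have inj : Function.Injective (fun x : {b : List ℕ // seqLT b a} => x.1.length) := by
      intro x y hxy
      rcases prefix_tricho x.2.1 y.2.1 with h' | h' | h'
      · exact absurd (seqLT_iff_len.1 h').2 (by simp only at hxy; omega)
      · exact Subtype.ext h'
      · exact absurd (seqLT_iff_len.1 h').2 (by simp only at hxy; omega)
    exact RelEmbedding.isWellOrder
      (⟨⟨fun x => x.1.length, inj⟩, fun {x y} => (key x y).symm⟩ :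
        (fun x y : {b : List ℕ // seqLT b a} => seqLT x.1 y.1) ↪r ((· < ·) : ℕ → ℕ → Prop))
  leaf := L

variable {Y : Type} {L : List ℕ → Set Y}

lemma mkTree_leaf (u : List ℕ) : (mkTree Y L).leaf u = L u := rfl

lemma mem_sons {u v : List ℕ} : v ∈ (mkTree Y L).Sons u ↔ ∃ i, v = u ++ [i] := by
  constructor
  · rintro ⟨h1, h2⟩
    obtain ⟨r, rfl⟩ := h1.1
    have hr : r ≠ [] := by rintro rfl; exact h1.2 (by simp)
    have hlen : r.length = 1 := by
      rcases lt_or_ge 1 r.length with h | h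
      · exfalso
        apply h2
        refine ⟨u ++ r.take 1, ?_, ?_⟩
        · exact seqLT_of_prefix_lt (List.prefix_append _ _)
            (by simp [List.length_take]; omega)
        · refine seqLT_of_prefix_lt ?_ (by simp [List.length_take]; omega)
          exact ⟨r.drop 1, by rw [List.append_assoc, List.take_append_drop]⟩
      · have : 0 < r.length := List.length_pos_iff.2 hr
        omega
    obtain ⟨x, rfl⟩ := List.length_eq_one_iff.1 hlen
    exact ⟨x, rfl⟩
  · rintro ⟨i, rfl⟩
    refine ⟨seqLT_append u i, ?_⟩
    rintro ⟨t, ht1, ht2⟩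
    have h1 := (seqLT_iff_len.1 ht1).2
    have h2 := (seqLT_iff_len.1 ht2).2
    simp at h2
    omega

lemma not_isMaxNode (u : List ℕ) : ¬ (mkTree Y L).IsMaxNode u :=
  fun h => h ⟨u ++ [0], seqLT_append u 0⟩

lemma height_eq (u : List ℕ) : (mkTree Y L).height u = (u.length : Ordinal) := by
  haveI := (mkTree Y L).wellOrdered u
  have iso : (fun x y : {b : List ℕ // seqLT b u} => seqLT x.1 y.1) ≃r
      ((· < ·) : Fin u.length → Fin u.length → Prop) := by
    refine ⟨⟨fun x => ⟨x.1.length, (seqLT_iff_len.1 x.2).2⟩,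
      fun k => ⟨u.take k.1, seqLT_of_prefix_lt (List.take_prefix _ _)
        (by rw [List.length_take]; omega)⟩, ?_, ?_⟩, ?_⟩
    · intro x
      apply Subtype.ext
      simp only
      rw [← List.prefix_iff_eq_take.1 x.2.1]
    · intro k
      apply Fin.ext
      simp only [List.length_take]
      omega
    · intro x y
      simp only [Equiv.coe_fn_mk, Fin.mk_lt_mk]
      constructor
      · intro h
        rcases prefix_tricho x.2.1 y.2.1 with h' | h' | h'
        · exact h'
        · exact absurd h (by rw [h']; exact lt_irrefl _)
        · exact absurd h (not_lt.2 (le_of_lt (seqLT_iff_len.1 h').2))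
      · exact fun h => (seqLT_iff_len.1 h).2
  calc (mkTree Y L).height u = Ordinal.type ((· < ·) : Fin u.length → Fin u.length → Prop) :=
        Ordinal.type_eq.2 ⟨iso⟩
    _ = (u.length : Ordinal) := Ordinal.type_fin u.length

/-- structure of a branch of the prefix tree -/
lemma branch_struct {B : Set (List ℕ)} (hB : (mkTree Y L).IsBranch B) :
    ∃ u : ℕ → List ℕ, (∀ n, u n ∈ B) ∧ (∀ n, (u n).length = n) ∧
      (∀ n, ∃ i, u (n + 1) = u n ++ [i]) ∧ (∀ v ∈ B, v = u v.length) := by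
  classical
  obtain ⟨hch, hmax⟩ := hB
  -- prefix closed
  have hpc : ∀ v ∈ B, ∀ w, w <+: v → w ∈ B := by
    intro v hv w hw
    rcases eq_or_ne w v with rfl | hne
    · exact hv
    have hwv : seqLT w v := ⟨hw, hne⟩
    have hchain : (mkTree Y L).IsChainN (insert w B) := by
      intro x hx y hy
      rcases hx with rfl | hx
      · rcases hy with rfl | hy
        · exact Or.inr (Or.inl rfl)
        · rcases hch v hv y hy with h | h | h
          · exact Or.inl (seqLT_trans hwv h)
          · exact Or.inl (h ▸ hwv)
          · exact prefix_tricho hw h.1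
      · rcases hy with rfl | hy
        · rcases hch v hv x hx with h | h | h
          · exact Or.inr (Or.inr (seqLT_trans hwv h))
          · exact Or.inr (Or.inr (h ▸ hwv))
          · rcases prefix_tricho hw h.1 with h' | h' | h'
            · exact Or.inr (Or.inr h')
            · exact Or.inr (Or.inl h'.symm)
            · exact Or.inl h'
        · exact hch x hx y hy
    have := hmax _ hchain (Set.subset_insert _ _)
    rw [this]
    exact Set.mem_insert _ _
  -- B nonempty
  have hne : B.Nonempty := by
    rcases Set.eq_empty_or_nonempty B with rfl | h
    · exfalso
      have hchain : (mkTree Y L).IsChainN {[]} := by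
        intro x hx y hy
        rcases hx with rfl
        rcases hy with rfl
        exact Or.inr (Or.inl rfl)
      have := hmax _ hchain (Set.empty_subset _)
      exact absurd this.symm (Set.singleton_ne_empty _)
    · exact h
  -- lengths unbounded
  have hub : ∀ n, ∃ v ∈ B, n ≤ v.length := by
    by_contra h
    push_neg at h
    obtain ⟨n, hn⟩ := h
    obtain ⟨v₀, hv₀⟩ := hne
    -- find element of maximal length
    set P : ℕ → Prop := fun k => ∃ v ∈ B, v.length = k with hP
    have hP0 : P v₀.length := ⟨v₀, hv₀, rfl⟩
    have hlen : v₀.length ≤ n := le_of_lt (hn v₀ hv₀)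
    set m := Nat.findGreatest P n with hm
    have hPm : P m := Nat.findGreatest_spec hlen hP0
    obtain ⟨v, hv, hvl⟩ := hPm
    have hmaxlen : ∀ w ∈ B, w.length ≤ v.length := by
      intro w hw
      by_contra hc
      push_neg at hc
      have : ¬ P w.length := Nat.findGreatest_is_greatest (by omega) (le_of_lt (hn w hw))
      exact this ⟨w, hw, rfl⟩
    have hchain : (mkTree Y L).IsChainN (insert (v ++ [0]) B) := by
      intro x hx y hy
      have key : ∀ w ∈ B, seqLT w (v ++ [0]) ∨ w = v := by
        intro w hw
        rcases hch w hw v hv with h | h | h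
        · exact Or.inl (seqLT_trans h (seqLT_append v 0))
        · exact Or.inr h
        · exact absurd (seqLT_iff_len.1 h).2 (not_lt.2 (hmaxlen w hw))
      rcases hx with rfl | hx
      · rcases hy with rfl | hy
        · exact Or.inr (Or.inl rfl)
        · rcases key y hy with h | rfl
          · exact Or.inr (Or.inr h)
          · exact Or.inr (Or.inr (seqLT_append y 0))
      · rcases hy with rfl | hy
        · rcases key x hx with h | rfl
          · exact Or.inl h
          · exact Or.inl (seqLT_append x 0)
        · exact hch x hx y hy
    have heq := hmax _ hchain (Set.subset_insert _ _)
    have : (v ++ [0]) ∈ B := by rw [heq]; exact Set.mem_insert _ _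
    have := hmaxlen _ this
    simp at this
  -- existence of element with each length
  have hex : ∀ n, ∃ v ∈ B, v.length = n := by
    intro n
    obtain ⟨v, hv, hvl⟩ := hub n
    refine ⟨v.take n, hpc v hv _ (List.take_prefix _ _), ?_⟩
    rw [List.length_take]; omega
  have huniq : ∀ v ∈ B, ∀ w ∈ B, v.length = w.length → v = w := by
    intro v hv w hw hl
    rcases hch v hv w hw with h | h | h
    · exact absurd (seqLT_iff_len.1 h).2 (by omega)
    · exact h
    · exact absurd (seqLT_iff_len.1 h).2 (by omega)
  choose u hu hul using hex
  refine ⟨u, hu, hul, ?_, ?_⟩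
  · intro n
    have h1 : seqLT (u n) (u (n + 1)) := by
      rcases hch _ (hu n) _ (hu (n + 1)) with h | h | h
      · exact h
      · exfalso; have := congrArg List.length h; rw [hul, hul] at this; omega
      · exfalso; have := (seqLT_iff_len.1 h).2; rw [hul, hul] at this; omega
    obtain ⟨r, hr⟩ := h1.1
    have : r.length = 1 := by
      have := congrArg List.length hr
      rw [hul] at this
      simp [hul] at this
      omega
    obtain ⟨x, rfl⟩ := List.length_eq_one_iff.1 this
    exact ⟨x, hr.symm⟩
  · intro v hv
    exact huniq v hv _ (hu v.length) (hul v.length).symm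

end PTaux
namespace PTaux

open Set

/-! ### Sorgenfrey topology -/

lemma sorg_isOpen_Ico (a b : ℝ) : @IsOpen SorgLine _ ((Set.Ico a b : Set ℝ)) :=
  TopologicalSpace.isOpen_generateFrom_of_mem ⟨a, b, rfl⟩

lemma sorg_open_ico {O : Set ℝ} (ho : @IsOpen SorgLine _ O) :
    ∀ p ∈ O, ∃ ε > (0:ℝ), Set.Ico p (p + ε) ⊆ O := by
  have ho' : TopologicalSpace.GenerateOpen {s : Set ℝ | ∃ a b : ℝ, s = Set.Ico a b} O := ho
  clear ho
  induction ho' with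
  | basic s hs =>
    obtain ⟨a, b, rfl⟩ := hs
    intro p hp
    refine ⟨b - p, by linarith [hp.1, hp.2], ?_⟩
    intro x hx
    exact ⟨le_trans hp.1 hx.1, by linarith [hx.2]⟩
  | univ => exact fun p _ => ⟨1, one_pos, subset_univ _⟩
  | inter s t hs ht ihs iht =>
    intro p hp
    obtain ⟨ε1, hε1, h1⟩ := ihs p hp.1
    obtain ⟨ε2, hε2, h2⟩ := iht p hp.2
    refine ⟨min ε1 ε2, lt_min hε1 hε2, ?_⟩
    intro x hx
    exact ⟨h1 ⟨hx.1, lt_of_lt_of_le hx.2 (by simp [min_le_left])⟩,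
      h2 ⟨hx.1, lt_of_lt_of_le hx.2 (by simp [min_le_right])⟩⟩
  | sUnion S hS ih =>
    rintro p ⟨s, hs, hp⟩
    obtain ⟨ε, hε, h⟩ := ih s hs p hp
    exact ⟨ε, hε, h.trans (subset_sUnion_of_mem hs)⟩

/-- coercion of a point of the subspace to `ℝ` -/
def pv (XS : Set SorgLine) (x : ↥XS) : ℝ := x.1

lemma mem_nhds_sorg {XS : Set SorgLine} {p : ↥XS} {U : Set ↥XS} (hU : U ∈ nhds p) :
    ∃ ε > (0:ℝ), pv XS ⁻¹' (Set.Ico (pv XS p) (pv XS p + ε)) ⊆ U := by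
  rw [mem_nhds_subtype] at hU
  obtain ⟨t, ht, hsub⟩ := hU
  rw [mem_nhds_iff] at ht
  obtain ⟨O, hOt, hO, hpO⟩ := ht
  obtain ⟨ε, hε, hIco⟩ := sorg_open_ico hO _ hpO
  refine ⟨ε, hε, ?_⟩
  intro x hx
  exact hsub (hOt (hIco hx))

/-! ### The choice of points of `X` -/

variable {X : Set ℝ}

open Classical in
noncomputable def pick (X : Set ℝ) (a b : ℝ) : ℝ :=
  if h : (X ∩ Set.Ioo a b).Nonempty then h.choose else a + (b - a) / 2

lemma pick_spec (hX : Xᶜ.Countable) {a b : ℝ} (hab : a < b) :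
    pick X a b ∈ X ∧ a < pick X a b ∧ pick X a b < b := by
  have hne : (X ∩ Set.Ioo a b).Nonempty := by
    by_contra h
    rw [Set.not_nonempty_iff_eq_empty] at h
    have hsub : Set.Ioo a b ⊆ Xᶜ := by
      intro x hx
      by_contra hc
      rw [Set.notMem_compl_iff] at hc
      exact Set.eq_empty_iff_forall_notMem.1 h x ⟨hc, hx⟩
    have hcnt : (Set.Ioo a b).Countable := hX.mono hsub
    rw [← Cardinal.le_aleph0_iff_set_countable, Cardinal.mk_Ioo_real hab] at hcnt
    exact absurd hcnt (by simp [Cardinal.aleph0_lt_continuum.not_ge])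
  rw [pick, dif_pos hne]
  have h := hne.choose_spec
  exact ⟨h.1, h.2.1, h.2.2⟩

/-! ### piece-finding helpers -/

lemma exists_piece {g : ℕ → ℝ} (hmono : Monotone g) {x : ℝ} (h0 : g 0 ≤ x)
    (hex : ∃ i, x < g i) : ∃ i, g i ≤ x ∧ x < g (i + 1) := by
  classical
  have hk : x < g (Nat.find hex) := Nat.find_spec hex
  have hk0 : Nat.find hex ≠ 0 := by
    intro h
    rw [h] at hk
    exact absurd h0 (not_le.2 hk)
  obtain ⟨j, hj⟩ := Nat.exists_eq_succ_of_ne_zero hk0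
  refine ⟨j, not_lt.1 (Nat.find_min hex (by omega)), ?_⟩
  rw [← Nat.succ_eq_add_one, ← hj]
  exact hk

lemma piece_unique {g : ℕ → ℝ} (hmono : StrictMono g) {x : ℝ} {i j : ℕ}
    (hi1 : g i ≤ x) (hi2 : x < g (i + 1)) (hj1 : g j ≤ x) (hj2 : x < g (j + 1)) : i = j := by
  by_contra hne
  rcases Nat.lt_or_ge i j with h | h
  · exact absurd (hmono.monotone (Nat.succ_le_of_lt h)) (not_le.2 (lt_of_le_of_lt hj1 hi2))
  · have h' : j < i := by omega
    exact absurd (hmono.monotone (Nat.succ_le_of_lt h')) (not_le.2 (lt_of_le_of_lt hi1 hj2))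

lemma piece_disjoint {g : ℕ → ℝ} (hmono : StrictMono g) {i j : ℕ} (hij : i ≠ j) :
    Disjoint (Set.Ico (g i) (g (i + 1))) (Set.Ico (g j) (g (j + 1))) := by
  rw [Set.disjoint_left]
  rintro x ⟨hi1, hi2⟩ ⟨hj1, hj2⟩
  exact hij (piece_unique hmono hi1 hi2 hj1 hj2)

lemma exists_piece_z {g : ℤ → ℝ} (hmono : Monotone g) {x : ℝ}
    (hlo : ∃ j, g j ≤ x) (hhi : ∃ j, x < g j) : ∃ j, g j ≤ x ∧ x < g (j + 1) := by
  obtain ⟨j0, hj0⟩ := hlo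
  have hex : ∃ n : ℕ, x < g (j0 + n) := by
    obtain ⟨j1, hj1⟩ := hhi
    refine ⟨(j1 - j0).toNat, lt_of_lt_of_le hj1 (hmono (by omega))⟩
  obtain ⟨n, hn1, hn2⟩ := exists_piece (g := fun n : ℕ => g (j0 + n))
    (fun n m h => hmono (by omega)) (by simpa using hj0) hex
  refine ⟨j0 + n, hn1, ?_⟩
  have : (j0 + (n + 1 : ℕ)) = j0 + n + 1 := by push_cast; ring
  rw [← this]
  exact hn2

lemma piece_unique_z {g : ℤ → ℝ} (hmono : StrictMono g) {x : ℝ} {i j : ℤ}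
    (hi1 : g i ≤ x) (hi2 : x < g (i + 1)) (hj1 : g j ≤ x) (hj2 : x < g (j + 1)) : i = j := by
  by_contra hne
  rcases lt_or_ge i j with h | h
  · exact absurd (hmono.monotone (by omega : i + 1 ≤ j)) (not_le.2 (lt_of_le_of_lt hj1 hi2))
  · have h' : j < i := by omega
    exact absurd (hmono.monotone (by omega : j + 1 ≤ i)) (not_le.2 (lt_of_le_of_lt hi1 hj2))

end PTaux
namespace PTaux

open Set

variable {X : Set ℝ}

/-! ### the basic subdivision sequence -/

noncomputable def tseq (a b : ℝ) (i : ℕ) : ℝ := b - (b - a) * (2⁻¹ : ℝ) ^ i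

noncomputable def cseq (X : Set ℝ) (a b : ℝ) : ℕ → ℝ
  | 0 => a
  | i + 1 => pick X (tseq a b (i + 1)) (tseq a b (i + 2))

section cseq
variable (hX : Xᶜ.Countable) {a b : ℝ} (hab : a < b)

lemma halfpow_pos (i : ℕ) : (0:ℝ) < (2⁻¹ : ℝ) ^ i := by positivity

lemma halfpow_le_one (i : ℕ) : (2⁻¹ : ℝ) ^ i ≤ 1 :=
  pow_le_one₀ (by norm_num) (by norm_num)

lemma tseq_zero : tseq a b 0 = a := by simp [tseq]

include hab

lemma tseq_succ_lt (i : ℕ) : tseq a b i < tseq a b (i + 1) := by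
  have h1 := halfpow_pos i
  simp only [tseq, pow_succ]
  nlinarith

lemma tseq_mono : StrictMono (tseq a b) := strictMono_nat_of_lt_succ (tseq_succ_lt hab)

lemma tseq_lt_b (i : ℕ) : tseq a b i < b := by
  have h1 := halfpow_pos i
  simp only [tseq]
  nlinarith

lemma tseq_ge_a (i : ℕ) : a ≤ tseq a b i := by
  have h1 := halfpow_le_one i
  have h2 := halfpow_pos i
  simp only [tseq]
  nlinarith

include hX

lemma cseq_spec (i : ℕ) : cseq X a b (i + 1) ∈ X ∧ tseq a b (i + 1) < cseq X a b (i + 1) ∧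
    cseq X a b (i + 1) < tseq a b (i + 2) := by
  exact pick_spec hX (tseq_succ_lt hab (i + 1))

lemma cseq_mono : StrictMono (cseq X a b) := by
  apply strictMono_nat_of_lt_succ
  intro i
  match i with
  | 0 =>
    have h := (cseq_spec hX hab 0).2.1
    have := tseq_succ_lt hab 0
    rw [tseq_zero] at this
    calc cseq X a b 0 = a := rfl
      _ < tseq a b 1 := this
      _ < cseq X a b 1 := h
  | i + 1 =>
    have h1 := (cseq_spec hX hab i).2.2
    have h2 := (cseq_spec hX hab (i + 1)).2.1
    exact lt_trans h1 h2

lemma cseq_lt_b (i : ℕ) : cseq X a b i < b := by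
  match i with
  | 0 => exact hab
  | i + 1 => exact lt_trans (cseq_spec hX hab i).2.2 (tseq_lt_b hab (i + 2))

lemma cseq_ge_a (i : ℕ) : a ≤ cseq X a b i := by
  match i with
  | 0 => exact le_refl a
  | i + 1 => exact le_of_lt (lt_of_le_of_lt (tseq_ge_a hab (i+1)) (cseq_spec hX hab i).2.1)

lemma cseq_mem (i : ℕ) : cseq X a b (i + 1) ∈ X := (cseq_spec hX hab i).1

lemma cseq_unbdd {x : ℝ} (hx : x < b) : ∃ i, x < cseq X a b i := by
  obtain ⟨n, hn⟩ := exists_pow_lt_of_lt_one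
    (show (0:ℝ) < (b - x) / (b - a) from div_pos (by linarith) (by linarith)) (by norm_num : (2⁻¹:ℝ) < 1)
  have hlt : (b - a) * (2⁻¹:ℝ) ^ n < b - x := by
    rw [div_eq_mul_inv] at hn
    have hba : (0:ℝ) < b - a := by linarith
    calc (b - a) * (2⁻¹:ℝ) ^ n < (b - a) * ((b - x) * (b - a)⁻¹) := by
          apply mul_lt_mul_of_pos_left hn hba
      _ = b - x := by field_simp
  have htx : x < tseq a b n := by simp only [tseq]; nlinarith
  refine ⟨n + 1, lt_of_lt_of_le htx (le_trans (le_of_lt (tseq_succ_lt hab n))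
    (le_of_lt (cseq_spec hX hab n).2.1))⟩

lemma cseq_gap (i : ℕ) : cseq X a b (i + 1) - cseq X a b i ≤ 3/4 * (b - a) := by
  match i with
  | 0 =>
    have h := (cseq_spec hX hab 0).2.2
    have : tseq a b 2 = b - (b - a) * 4⁻¹ := by
      rw [tseq]; norm_num
    rw [this] at h
    have : cseq X a b 0 = a := rfl
    rw [this]
    linarith
  | i + 1 =>
    have h1 := (cseq_spec hX hab i).2.1
    have h2 := (cseq_spec hX hab (i + 1)).2.2
    have hP := halfpow_pos i
    have hP1 := halfpow_le_one i
    have e1 : tseq a b (i + 3) = b - (b - a) * ((2⁻¹:ℝ)^i * 8⁻¹) := by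
      simp only [tseq]; ring
    have e2 : tseq a b (i + 1) = b - (b - a) * ((2⁻¹:ℝ)^i * 2⁻¹) := by
      simp only [tseq]; ring
    rw [e1] at h2
    rw [e2] at h1
    nlinarith

end cseq

/-! ### the subdivision with one inserted cut -/

open Classical in
noncomputable def iStar (X : Set ℝ) (a b qq : ℝ) : ℕ :=
  if h : ∃ i, qq < cseq X a b i then Nat.find h else 0

open Classical in
noncomputable def gseq (X : Set ℝ) (a b qq : ℝ) (j : ℕ) : ℝ :=
  if j < iStar X a b qq then cseq X a b j
  else if j = iStar X a b qq then qq else cseq X a b (j - 1)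

section gseq
variable (hX : Xᶜ.Countable) {a b qq : ℝ} (hab : a < b) (hq : qq ∈ Set.Ioo a b) (hqX : qq ∉ X)

lemma gseq_eval_lt {j : ℕ} (h : j < iStar X a b qq) : gseq X a b qq j = cseq X a b j := by
  rw [gseq, if_pos h]

lemma gseq_eval_eq : gseq X a b qq (iStar X a b qq) = qq := by
  rw [gseq, if_neg (lt_irrefl _), if_pos rfl]

lemma gseq_eval_gt {j : ℕ} (h : iStar X a b qq < j) : gseq X a b qq j = cseq X a b (j - 1) := by
  rw [gseq, if_neg (by omega), if_neg (by omega)]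

include hX hab hq

lemma iStar_pos : 1 ≤ iStar X a b qq := by
  have hex : ∃ i, qq < cseq X a b i := cseq_unbdd hX hab hq.2
  rw [iStar, dif_pos hex]
  rcases Nat.eq_zero_or_pos (Nat.find hex) with h | h
  · exfalso
    have := Nat.find_spec hex
    rw [h] at this
    exact absurd hq.1 (not_lt.2 (le_of_lt this))
  · omega

lemma iStar_lt : qq < cseq X a b (iStar X a b qq) := by
  have hex : ∃ i, qq < cseq X a b i := cseq_unbdd hX hab hq.2
  rw [iStar, dif_pos hex]
  exact Nat.find_spec hex

lemma iStar_le {j : ℕ} (hj : j < iStar X a b qq) : cseq X a b j ≤ qq := by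
  have hex : ∃ i, qq < cseq X a b i := cseq_unbdd hX hab hq.2
  rw [iStar, dif_pos hex] at hj
  exact not_lt.1 (Nat.find_min hex hj)

lemma gseq_zero : gseq X a b qq 0 = a := by
  rw [gseq_eval_lt (by have := iStar_pos hX hab hq; omega)]
  rfl

include hqX

lemma iStar_lt_strict {j : ℕ} (hj : j < iStar X a b qq) : cseq X a b j < qq := by
  have h := iStar_le hX hab hq hj
  match j with
  | 0 => exact hq.1
  | j + 1 =>
    rcases lt_or_eq_of_le h with h' | h'
    · exact h'
    · exact absurd (h' ▸ cseq_mem hX hab j) hqX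

lemma gseq_mono : StrictMono (gseq X a b qq) := by
  apply strictMono_nat_of_lt_succ
  intro j
  rcases Nat.lt_trichotomy (j + 1) (iStar X a b qq) with h | h | h
  · rw [gseq_eval_lt h, gseq_eval_lt (by omega)]
    exact cseq_mono hX hab (by omega)
  · rw [h, gseq_eval_eq, gseq_eval_lt (by omega)]
    exact iStar_lt_strict hX hab hq hqX (by omega)
  · rcases Nat.eq_or_lt_of_le (show iStar X a b qq ≤ j by omega) with h'' | h''
    · rw [← h'', gseq_eval_eq, gseq_eval_gt (by omega)]
      have e : iStar X a b qq + 1 - 1 = iStar X a b qq := by omega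
      rw [e]
      exact iStar_lt hX hab hq
    · rw [gseq_eval_gt (show iStar X a b qq < j + 1 by omega), gseq_eval_gt h'']
      have e : j + 1 - 1 = j := by omega
      rw [e]
      exact cseq_mono hX hab (by omega)

lemma gseq_lt_b (j : ℕ) : gseq X a b qq j < b := by
  rcases Nat.lt_trichotomy j (iStar X a b qq) with h | h | h
  · rw [gseq_eval_lt h]; exact cseq_lt_b hX hab j
  · rw [h, gseq_eval_eq]; exact hq.2
  · rw [gseq_eval_gt h]; exact cseq_lt_b hX hab (j - 1)

lemma gseq_unbdd {x : ℝ} (hx : x < b) : ∃ j, x < gseq X a b qq j := by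
  obtain ⟨i, hi⟩ := cseq_unbdd hX hab hx
  refine ⟨max (i + 1) (iStar X a b qq + 1), ?_⟩
  rw [gseq_eval_gt (by omega)]
  exact lt_of_lt_of_le hi ((cseq_mono hX hab).monotone (by omega))

lemma gseq_ge_a (j : ℕ) : a ≤ gseq X a b qq j := by
  rcases Nat.eq_zero_or_pos j with rfl | h
  · rw [gseq_zero hX hab hq]
  · have h2 := gseq_mono hX hab hq hqX (show 0 < j from h)
    rw [gseq_zero hX hab hq] at h2
    exact le_of_lt h2

lemma gseq_gap (j : ℕ) : gseq X a b qq (j + 1) - gseq X a b qq j ≤ 3/4 * (b - a) := by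
  have hm1 : 1 ≤ iStar X a b qq := iStar_pos hX hab hq
  rcases Nat.lt_trichotomy (j + 1) (iStar X a b qq) with h | h | h
  · rw [gseq_eval_lt h, gseq_eval_lt (by omega)]
    exact cseq_gap hX hab j
  · rw [h, gseq_eval_eq, gseq_eval_lt (by omega)]
    have h1 : qq < cseq X a b (j + 1) := by
      have h2 := iStar_lt hX hab hq
      rwa [← h] at h2
    have h3 := cseq_gap hX hab j
    linarith
  · rcases Nat.eq_or_lt_of_le (show iStar X a b qq ≤ j by omega) with h'' | h''
    · rw [← h'', gseq_eval_eq, gseq_eval_gt (by omega)]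
      have e : iStar X a b qq + 1 - 1 = iStar X a b qq := by omega
      rw [e, h'']
      have h1 : cseq X a b (j - 1) < qq := by
        have h2 := iStar_lt_strict hX hab hq hqX (show j - 1 < iStar X a b qq by omega)
        exact h2
      have h2 := cseq_gap hX hab (j - 1)
      have e2 : j - 1 + 1 = j := by omega
      rw [e2] at h2
      linarith
    · rw [gseq_eval_gt (show iStar X a b qq < j + 1 by omega), gseq_eval_gt h'']
      have e : j + 1 - 1 = j := by omega
      rw [e]
      have h2 := cseq_gap hX hab (j - 1)
      have e2 : j - 1 + 1 = j := by omega
      rw [e2] at h2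
      exact h2

lemma gseq_mem {j : ℕ} (h0 : j ≠ 0) (hm : j ≠ iStar X a b qq) : gseq X a b qq j ∈ X := by
  have hm1 : 1 ≤ iStar X a b qq := iStar_pos hX hab hq
  rcases Nat.lt_or_ge j (iStar X a b qq) with h | h
  · rw [gseq_eval_lt h]
    match j, h0 with
    | j + 1, _ => exact cseq_mem hX hab j
  · rw [gseq_eval_gt (by omega)]
    have h1 : 1 ≤ j - 1 := by omega
    obtain ⟨i, hi⟩ : ∃ i, j - 1 = i + 1 := ⟨j - 2, by omega⟩
    rw [hi]
    exact cseq_mem hX hab i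

lemma gseq_qq_piece {j : ℕ} (h1 : gseq X a b qq j ≤ qq) (h2 : qq < gseq X a b qq (j + 1)) :
    j = iStar X a b qq := by
  apply piece_unique (gseq_mono hX hab hq hqX) h1 h2
  · exact le_of_eq gseq_eval_eq
  · rw [gseq_eval_gt (by omega)]
    have e : iStar X a b qq + 1 - 1 = iStar X a b qq := by omega
    rw [e]
    exact iStar_lt hX hab hq

end gseq

end PTaux
namespace PTaux

open Set

variable {X : Set ℝ}

/-! ### the two-sided subdivision -/

noncomputable def wfun (j : ℤ) : ℝ := (2:ℝ)^j / (1 + (2:ℝ)^j)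

noncomputable def sseq (a b : ℝ) (j : ℤ) : ℝ := a + (b - a) * wfun j

noncomputable def dseq (X : Set ℝ) (a b : ℝ) (j : ℤ) : ℝ :=
  pick X (sseq a b j) (sseq a b (j + 1))

lemma two_zpow_pos (j : ℤ) : (0:ℝ) < (2:ℝ)^j := zpow_pos (by norm_num) j

lemma two_zpow_denom_pos (j : ℤ) : (0:ℝ) < 1 + (2:ℝ)^j := by
  have := two_zpow_pos j
  linarith

lemma two_zpow_succ (j : ℤ) : (2:ℝ)^(j+1) = (2:ℝ)^j * 2 := by
  rw [zpow_add_one₀ (by norm_num : (2:ℝ) ≠ 0)]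

lemma wfun_pos (j : ℤ) : 0 < wfun j :=
  div_pos (two_zpow_pos j) (two_zpow_denom_pos j)

lemma wfun_lt_one (j : ℤ) : wfun j < 1 := by
  rw [wfun, div_lt_one (two_zpow_denom_pos j)]
  linarith

lemma wfun_succ_lt (j : ℤ) : wfun j < wfun (j + 1) := by
  rw [wfun, wfun, div_lt_div_iff₀ (two_zpow_denom_pos j) (two_zpow_denom_pos (j+1)),
    two_zpow_succ]
  have := two_zpow_pos j
  nlinarith

lemma wfun_mono : StrictMono wfun := strictMono_int_of_lt_succ wfun_succ_lt

lemma wfun_two_gap (j : ℤ) : wfun (j + 2) - wfun j ≤ 3/4 := by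
  have e : (2:ℝ)^(j+2) = (2:ℝ)^j * 4 := by
    have : j + 2 = j + 1 + 1 := by ring
    rw [this, two_zpow_succ, two_zpow_succ]
    ring
  set t := (2:ℝ)^j with ht
  have htp : 0 < t := two_zpow_pos j
  rw [wfun, wfun, e]
  have h1 : (0:ℝ) < 1 + t := by linarith
  have h2 : (0:ℝ) < 1 + t * 4 := by linarith
  have key : t * 4 / (1 + t * 4) - t / (1 + t) = 3 * t / ((1 + t * 4) * (1 + t)) := by
    field_simp
    ring
  rw [key, div_le_iff₀ (by positivity)]
  nlinarith

lemma wfun_le (j : ℤ) : wfun j ≤ (2:ℝ)^j :=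
  div_le_self (le_of_lt (two_zpow_pos j)) (by have := two_zpow_pos j; linarith)

lemma wfun_ge (j : ℤ) : 1 - ((2:ℝ)^j)⁻¹ ≤ wfun j := by
  have htp := two_zpow_pos j
  have h1 : (0:ℝ) < 1 + (2:ℝ)^j := by linarith
  have key : wfun j = 1 - 1/(1 + (2:ℝ)^j) := by
    rw [wfun]
    field_simp
    ring
  have h2 : 1/(1 + (2:ℝ)^j) ≤ 1/((2:ℝ)^j) := one_div_le_one_div_of_le htp (by linarith)
  rw [key, ← one_div]
  linarith

section dseq
variable (hX : Xᶜ.Countable) {a b : ℝ} (hab : a < b)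

include hab

lemma sseq_succ_lt (j : ℤ) : sseq a b j < sseq a b (j + 1) := by
  have := wfun_succ_lt j
  have hba : (0:ℝ) < b - a := by linarith
  simp only [sseq]
  nlinarith

lemma sseq_mono : StrictMono (sseq a b) := strictMono_int_of_lt_succ (sseq_succ_lt hab)

lemma sseq_gt_a (j : ℤ) : a < sseq a b j := by
  have := wfun_pos j
  have hba : (0:ℝ) < b - a := by linarith
  simp only [sseq]
  nlinarith

lemma sseq_lt_b (j : ℤ) : sseq a b j < b := by
  have := wfun_lt_one j
  have := wfun_pos j
  have hba : (0:ℝ) < b - a := by linarith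
  simp only [sseq]
  nlinarith

include hX

lemma dseq_spec (j : ℤ) : dseq X a b j ∈ X ∧ sseq a b j < dseq X a b j ∧
    dseq X a b j < sseq a b (j + 1) :=
  pick_spec hX (sseq_succ_lt hab j)

lemma dseq_mono : StrictMono (dseq X a b) := by
  apply strictMono_int_of_lt_succ
  intro j
  exact lt_trans (dseq_spec hX hab j).2.2 (dseq_spec hX hab (j+1)).2.1

lemma dseq_gt_a (j : ℤ) : a < dseq X a b j :=
  lt_trans (sseq_gt_a hab j) (dseq_spec hX hab j).2.1

lemma dseq_lt_b (j : ℤ) : dseq X a b j < b :=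
  lt_trans (dseq_spec hX hab j).2.2 (sseq_lt_b hab (j + 1))

lemma dseq_mem (j : ℤ) : dseq X a b j ∈ X := (dseq_spec hX hab j).1

lemma dseq_gap (j : ℤ) : dseq X a b (j + 1) - dseq X a b j ≤ 3/4 * (b - a) := by
  have h1 := (dseq_spec hX hab j).2.1
  have h2 := (dseq_spec hX hab (j + 1)).2.2
  have h3 := wfun_two_gap j
  have hba : (0:ℝ) < b - a := by linarith
  have e : j + 1 + 1 = j + 2 := by ring
  rw [e] at h2
  simp only [sseq] at h1 h2
  nlinarith

lemma dseq_lo {x : ℝ} (hx : a < x) : ∃ j, dseq X a b j ≤ x := by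
  obtain ⟨n, hn⟩ := exists_pow_lt_of_lt_one
    (show (0:ℝ) < (x - a) / (b - a) from div_pos (by linarith) (by linarith))
    (by norm_num : (2⁻¹:ℝ) < 1)
  have hba : (0:ℝ) < b - a := by linarith
  have hlt : (b - a) * (2⁻¹:ℝ) ^ n < x - a := by
    rw [div_eq_mul_inv] at hn
    calc (b - a) * (2⁻¹:ℝ) ^ n < (b - a) * ((x - a) * (b - a)⁻¹) :=
          mul_lt_mul_of_pos_left hn hba
      _ = x - a := by field_simp
  refine ⟨-(n+1), le_of_lt ?_⟩
  have h1 := (dseq_spec hX hab (-(n+1))).2.2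
  have e : (-(n+1) : ℤ) + 1 = -(n:ℤ) := by ring
  rw [e] at h1
  have h2 : wfun (-(n:ℤ)) ≤ (2:ℝ)^(-(n:ℤ)) := wfun_le _
  have h3 : (2:ℝ)^(-(n:ℤ)) = (2⁻¹:ℝ)^n := by
    rw [zpow_neg, zpow_natCast, inv_pow]
  have h4 : sseq a b (-(n:ℤ)) ≤ a + (b - a) * (2⁻¹:ℝ)^n := by
    simp only [sseq]
    rw [← h3]
    nlinarith
  linarith

lemma dseq_hi {x : ℝ} (hx : x < b) : ∃ j, x < dseq X a b j := by
  obtain ⟨n, hn⟩ := exists_pow_lt_of_lt_one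
    (show (0:ℝ) < (b - x) / (b - a) from div_pos (by linarith) (by linarith))
    (by norm_num : (2⁻¹:ℝ) < 1)
  have hba : (0:ℝ) < b - a := by linarith
  have hlt : (b - a) * (2⁻¹:ℝ) ^ n < b - x := by
    rw [div_eq_mul_inv] at hn
    calc (b - a) * (2⁻¹:ℝ) ^ n < (b - a) * ((b - x) * (b - a)⁻¹) :=
          mul_lt_mul_of_pos_left hn hba
      _ = b - x := by field_simp
  refine ⟨(n:ℤ), ?_⟩
  have h1 := (dseq_spec hX hab (n:ℤ)).2.1
  have h2 : 1 - ((2:ℝ)^(n:ℤ))⁻¹ ≤ wfun (n:ℤ) := wfun_ge _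
  have h3 : ((2:ℝ)^(n:ℤ))⁻¹ = (2⁻¹:ℝ)^n := by
    rw [zpow_natCast, inv_pow]
  have h4 : b - (b - a) * (2⁻¹:ℝ)^n ≤ sseq a b (n:ℤ) := by
    simp only [sseq]
    rw [← h3]
    nlinarith
  linarith

end dseq

/-! ### the root subdivision -/

noncomputable def eseq (X : Set ℝ) (j : ℤ) : ℝ := pick X ((j:ℝ)/2) ((j:ℝ)/2 + 4⁻¹)

section eseq
variable (hX : Xᶜ.Countable)

include hX

lemma eseq_spec (j : ℤ) : eseq X j ∈ X ∧ (j:ℝ)/2 < eseq X j ∧ eseq X j < (j:ℝ)/2 + 4⁻¹ :=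
  pick_spec hX (by norm_num)

lemma eseq_mono : StrictMono (eseq X) := by
  apply strictMono_int_of_lt_succ
  intro j
  have h1 := (eseq_spec hX j).2.2
  have h2 := (eseq_spec hX (j+1)).2.1
  push_cast at h2
  linarith

lemma eseq_gap (j : ℤ) : eseq X (j + 1) - eseq X j ≤ 1 := by
  have h1 := (eseq_spec hX j).2.1
  have h2 := (eseq_spec hX (j+1)).2.2
  push_cast at h2
  linarith

lemma eseq_lo (x : ℝ) : ∃ j, eseq X j ≤ x := by
  refine ⟨⌈2*x⌉ - 2, le_of_lt ?_⟩
  have h1 := (eseq_spec hX (⌈2*x⌉ - 2)).2.2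
  have h2 : (⌈2*x⌉ : ℝ) < 2*x + 1 := Int.ceil_lt_add_one _
  push_cast at h1
  linarith

lemma eseq_hi (x : ℝ) : ∃ j, x < eseq X j := by
  refine ⟨⌈2*x⌉, ?_⟩
  have h1 := (eseq_spec hX ⌈2*x⌉).2.1
  have h2 : 2*x ≤ (⌈2*x⌉ : ℝ) := Int.le_ceil _
  linarith

end eseq

end PTaux
namespace PTaux

open Set

variable {X : Set ℝ} {qe : ℕ → ℝ}

/-! ### the child intervals -/

noncomputable def zOf : ℕ → ℤ := fun n => (Denumerable.eqv ℤ).symm n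

lemma zOf_inj : Function.Injective zOf := (Denumerable.eqv ℤ).symm.injective

lemma zOf_surj : Function.Surjective zOf := (Denumerable.eqv ℤ).symm.surjective

def insCond (X : Set ℝ) (qe : ℕ → ℝ) (h : ℕ) (a b : ℝ) : Prop :=
  h % 2 = 1 ∧ qe ((h-1)/2) ∈ Set.Ioo a b ∧ qe ((h-1)/2) ∉ X

open Classical in
noncomputable def childIv (X : Set ℝ) (qe : ℕ → ℝ) (h : ℕ) (ab : ℝ × ℝ) (i : ℕ) : ℝ × ℝ :=
  if ab.1 ∈ X then
    if insCond X qe h ab.1 ab.2 then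
      (gseq X ab.1 ab.2 (qe ((h-1)/2)) i, gseq X ab.1 ab.2 (qe ((h-1)/2)) (i+1))
    else (cseq X ab.1 ab.2 i, cseq X ab.1 ab.2 (i+1))
  else (dseq X ab.1 ab.2 (zOf i), dseq X ab.1 ab.2 (zOf i + 1))

section child
variable (hX : Xᶜ.Countable) {ab : ℝ × ℝ} (hab : ab.1 < ab.2)

include hX hab

/-- in the `a ∈ X` case, the children come from a boundary sequence -/
lemma childIv_boundary (h : ℕ) (haX : ab.1 ∈ X) :
    ∃ g : ℕ → ℝ, (∀ i, childIv X qe h ab i = (g i, g (i+1))) ∧ StrictMono g ∧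
      g 0 = ab.1 ∧ (∀ i, g i < ab.2) ∧ (∀ x, x < ab.2 → ∃ i, x < g i) ∧
      (∀ i, g (i+1) - g i ≤ 3/4 * (ab.2 - ab.1)) := by
  by_cases hc : insCond X qe h ab.1 ab.2
  · refine ⟨gseq X ab.1 ab.2 (qe ((h-1)/2)), fun i => ?_, gseq_mono hX hab hc.2.1 hc.2.2,
      gseq_zero hX hab hc.2.1, gseq_lt_b hX hab hc.2.1 hc.2.2, fun x hx => gseq_unbdd hX hab hc.2.1 hc.2.2 hx,
      gseq_gap hX hab hc.2.1 hc.2.2⟩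
    rw [childIv, if_pos haX, if_pos hc]
  · refine ⟨cseq X ab.1 ab.2, fun i => ?_, cseq_mono hX hab, rfl,
      cseq_lt_b hX hab, fun x hx => cseq_unbdd hX hab hx, cseq_gap hX hab⟩
    rw [childIv, if_pos haX, if_neg hc]

lemma childIv_z (h i : ℕ) (haX : ab.1 ∉ X) :
    childIv X qe h ab i = (dseq X ab.1 ab.2 (zOf i), dseq X ab.1 ab.2 (zOf i + 1)) := by
  rw [childIv, if_neg haX]

lemma childIv_step (h i : ℕ) :
    ab.1 ≤ (childIv X qe h ab i).1 ∧ (childIv X qe h ab i).1 < (childIv X qe h ab i).2 ∧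
    (childIv X qe h ab i).2 < ab.2 ∧
    (childIv X qe h ab i).2 - (childIv X qe h ab i).1 ≤ 3/4 * (ab.2 - ab.1) ∧
    (h % 2 = 0 → (childIv X qe h ab i).1 ∈ X) := by
  by_cases haX : ab.1 ∈ X
  · obtain ⟨g, hg, hmono, h0, hlt, _, hgap⟩ := childIv_boundary hX hab h haX
    rw [hg i]
    refine ⟨h0 ▸ hmono.monotone (Nat.zero_le i), hmono (by omega), hlt (i+1), hgap i, ?_⟩
    intro hpar
    by_cases hc : insCond X qe h ab.1 ab.2
    · exact absurd hc.1 (by omega)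
    · have he : childIv X qe h ab i = (cseq X ab.1 ab.2 i, cseq X ab.1 ab.2 (i+1)) := by
        rw [childIv, if_pos haX, if_neg hc]
      have : g i = cseq X ab.1 ab.2 i := by
        have := (hg i).symm.trans he
        exact (Prod.ext_iff.1 this).1
      rw [this]
      rcases Nat.eq_zero_or_pos i with rfl | hi
      · exact haX
      · obtain ⟨i', rfl⟩ : ∃ i', i = i' + 1 := ⟨i - 1, by omega⟩
        exact cseq_mem hX hab i'
  · rw [childIv_z hX hab h i haX]
    exact ⟨le_of_lt (dseq_gt_a hX hab _), dseq_mono hX hab (by omega), dseq_lt_b hX hab _,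
      dseq_gap hX hab _, fun _ => dseq_mem hX hab _⟩

lemma childIv_cover {x : ℝ} (h : ℕ) (hx1 : x ∈ Set.Ico ab.1 ab.2) (hx2 : x ∈ X) :
    ∃ i, x ∈ Set.Ico (childIv X qe h ab i).1 (childIv X qe h ab i).2 := by
  by_cases haX : ab.1 ∈ X
  · obtain ⟨g, hg, hmono, h0, _, hunb, _⟩ := childIv_boundary hX hab h haX
    obtain ⟨i, hi1, hi2⟩ := exists_piece hmono.monotone (h0 ▸ hx1.1) (hunb x hx1.2)
    exact ⟨i, by rw [hg i]; exact ⟨hi1, hi2⟩⟩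
  · have hax : ab.1 < x := by
      rcases lt_or_eq_of_le hx1.1 with h' | h'
      · exact h'
      · exact absurd (h' ▸ hx2) haX
    obtain ⟨j, hj1, hj2⟩ := exists_piece_z (dseq_mono hX hab).monotone
      (dseq_lo hX hab hax) (dseq_hi hX hab hx1.2)
    obtain ⟨i, rfl⟩ := zOf_surj j
    exact ⟨i, by rw [childIv_z hX hab h i haX]; exact ⟨hj1, hj2⟩⟩

lemma childIv_disj (h : ℕ) {i j : ℕ} (hij : i ≠ j) :
    Disjoint (Set.Ico (childIv X qe h ab i).1 (childIv X qe h ab i).2)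
      (Set.Ico (childIv X qe h ab j).1 (childIv X qe h ab j).2) := by
  by_cases haX : ab.1 ∈ X
  · obtain ⟨g, hg, hmono, _, _, _, _⟩ := childIv_boundary hX hab h haX
    rw [hg i, hg j]
    exact piece_disjoint hmono hij
  · rw [childIv_z hX hab h i haX, childIv_z hX hab h j haX]
    rw [Set.disjoint_left]
    rintro x ⟨hi1, hi2⟩ ⟨hj1, hj2⟩
    exact hij (zOf_inj (piece_unique_z (dseq_mono hX hab) hi1 hi2 hj1 hj2))

lemma childIv_excl (h i : ℕ) (hins : insCond X qe h ab.1 ab.2) (haX : ab.1 ∈ X)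
    (hmem : qe ((h-1)/2) ∈ Set.Ico (childIv X qe h ab i).1 (childIv X qe h ab i).2) :
    (childIv X qe h ab i).1 = qe ((h-1)/2) := by
  have he : childIv X qe h ab i =
      (gseq X ab.1 ab.2 (qe ((h-1)/2)) i, gseq X ab.1 ab.2 (qe ((h-1)/2)) (i+1)) := by
    rw [childIv, if_pos haX, if_pos hins]
  rw [he] at hmem ⊢
  have := gseq_qq_piece hX hab hins.2.1 hins.2.2 hmem.1 hmem.2
  rw [this]
  exact gseq_eval_eq

end child

/-! ### the root subdivision -/

noncomputable def rootChildIv (X : Set ℝ) (i : ℕ) : ℝ × ℝ :=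
  (eseq X (zOf i), eseq X (zOf i + 1))

section root
variable (hX : Xᶜ.Countable)

include hX

lemma rootChildIv_step (i : ℕ) :
    (rootChildIv X i).1 < (rootChildIv X i).2 ∧
    (rootChildIv X i).2 - (rootChildIv X i).1 ≤ 1 ∧ (rootChildIv X i).1 ∈ X :=
  ⟨eseq_mono hX (by omega), eseq_gap hX _, (eseq_spec hX _).1⟩

lemma rootChildIv_cover (x : ℝ) :
    ∃ i, x ∈ Set.Ico (rootChildIv X i).1 (rootChildIv X i).2 := by
  obtain ⟨j, hj1, hj2⟩ := exists_piece_z (eseq_mono hX).monotone (eseq_lo hX x) (eseq_hi hX x)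
  obtain ⟨i, rfl⟩ := zOf_surj j
  exact ⟨i, hj1, hj2⟩

lemma rootChildIv_disj {i j : ℕ} (hij : i ≠ j) :
    Disjoint (Set.Ico (rootChildIv X i).1 (rootChildIv X i).2)
      (Set.Ico (rootChildIv X j).1 (rootChildIv X j).2) := by
  rw [Set.disjoint_left]
  rintro x ⟨hi1, hi2⟩ ⟨hj1, hj2⟩
  exact hij (zOf_inj (piece_unique_z (eseq_mono hX) hi1 hi2 hj1 hj2))

end root

/-! ### the interval of a node -/

noncomputable def goIv (X : Set ℝ) (qe : ℕ → ℝ) : ℕ → ℝ × ℝ → List ℕ → ℝ × ℝ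
  | _, ab, [] => ab
  | h, ab, i :: t => goIv X qe (h+1) (childIv X qe h ab i) t

noncomputable def segIv (X : Set ℝ) (qe : ℕ → ℝ) : List ℕ → ℝ × ℝ
  | [] => (0, 1)
  | i :: t => goIv X qe 1 (rootChildIv X i) t

lemma goIv_append (h : ℕ) (ab : ℝ × ℝ) (t : List ℕ) (i : ℕ) :
    goIv X qe h ab (t ++ [i]) = childIv X qe (h + t.length) (goIv X qe h ab t) i := by
  induction t generalizing h ab with
  | nil => simp [goIv]
  | cons x t ih =>
    rw [List.cons_append]
    show goIv X qe (h+1) (childIv X qe h ab x) (t ++ [i]) = _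
    rw [ih]
    show childIv X qe (h + 1 + t.length) _ i = childIv X qe (h + (x :: t).length) _ i
    congr 1
    simp
    omega

lemma segIv_append {u : List ℕ} (hu : u ≠ []) (i : ℕ) :
    segIv X qe (u ++ [i]) = childIv X qe u.length (segIv X qe u) i := by
  match u, hu with
  | x :: t, _ =>
    rw [List.cons_append]
    show goIv X qe 1 (rootChildIv X x) (t ++ [i]) = _
    rw [goIv_append]
    show childIv X qe (1 + t.length) _ i = childIv X qe ((x :: t).length) _ i
    congr 1
    simp
    omega

lemma segIv_single (i : ℕ) : segIv X qe [i] = rootChildIv X i := rfl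

section seg
variable (hX : Xᶜ.Countable)

include hX

lemma segIv_good : ∀ u : List ℕ, u ≠ [] →
    (segIv X qe u).1 < (segIv X qe u).2 ∧
    (u.length % 2 = 1 → (segIv X qe u).1 ∈ X) ∧
    (segIv X qe u).2 - (segIv X qe u).1 ≤ (3/4 : ℝ)^(u.length - 1) := by
  intro u
  induction u using List.reverseRecOn with
  | nil => intro h; exact absurd rfl h
  | append_singleton u i ih =>
    intro _
    rcases eq_or_ne u [] with rfl | hne
    · have st := rootChildIv_step hX (X := X) i
      simp only [List.nil_append, List.length_cons, List.length_nil]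
      rw [segIv_single]
      refine ⟨st.1, fun _ => st.2.2, ?_⟩
      simpa using st.2.1
    · obtain ⟨ih1, ih2, ih3⟩ := ih hne
      rw [segIv_append hne i]
      have st := childIv_step hX (qe := qe) ih1 u.length i
      have hlen : (u ++ [i]).length = u.length + 1 := by simp
      have hlen1 : 1 ≤ u.length := by
        rcases u with _ | ⟨x, t⟩
        · exact absurd rfl hne
        · simp
      refine ⟨st.2.1, ?_, ?_⟩
      · intro hpar
        rw [hlen] at hpar
        exact st.2.2.2.2 (by omega)
      · have h1 : (childIv X qe u.length (segIv X qe u) i).2 -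
            (childIv X qe u.length (segIv X qe u) i).1 ≤
            3/4 * ((3/4 : ℝ)^(u.length - 1)) := by
          calc (childIv X qe u.length (segIv X qe u) i).2 -
              (childIv X qe u.length (segIv X qe u) i).1
              ≤ 3/4 * ((segIv X qe u).2 - (segIv X qe u).1) := st.2.2.2.1
            _ ≤ 3/4 * ((3/4 : ℝ)^(u.length - 1)) := by
                apply mul_le_mul_of_nonneg_left ih3 (by norm_num)
        have h2 : (3/4 : ℝ) * ((3/4 : ℝ)^(u.length - 1)) = (3/4 : ℝ)^(u.length) := by
          rw [← pow_succ']
          congr 1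
          omega
        rw [hlen]
        simpa [h2] using h1

end seg

end PTaux
namespace PTaux

open Set

/-! ### the tree on a subspace of the Sorgenfrey line -/

def toR (XS : Set SorgLine) : Set ℝ := XS

noncomputable def leafSet (X : Set ℝ) (qe : ℕ → ℝ) (u : List ℕ) : Set ℝ :=
  if u = [] then Set.univ else Set.Ico (segIv X qe u).1 (segIv X qe u).2

noncomputable def theTree (XS : Set SorgLine) (qe : ℕ → ℝ) : FoliageTree ↥XS :=
  mkTree ↥XS (fun u => pv XS ⁻¹' leafSet (toR XS) qe u)

variable {X : Set ℝ} {qe : ℕ → ℝ}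

lemma leafSet_nil : leafSet X qe [] = Set.univ := if_pos rfl

lemma leafSet_ne {u : List ℕ} (hu : u ≠ []) :
    leafSet X qe u = Set.Ico (segIv X qe u).1 (segIv X qe u).2 := if_neg hu

lemma leafSet_append {u : List ℕ} (hu : u ≠ []) (i : ℕ) :
    leafSet X qe (u ++ [i]) = Set.Ico (childIv X qe u.length (segIv X qe u) i).1
      (childIv X qe u.length (segIv X qe u) i).2 := by
  rw [leafSet_ne (by simp [hu]), segIv_append hu]

lemma leafSet_single (i : ℕ) :
    leafSet X qe [i] = Set.Ico (rootChildIv X i).1 (rootChildIv X i).2 := by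
  rw [leafSet_ne (by simp), segIv_single]

section assembly
variable {XS : Set SorgLine} (hX : (toR XS)ᶜ.Countable)

lemma theTree_leaf (u : List ℕ) :
    (theTree XS qe).leaf u = pv XS ⁻¹' leafSet (toR XS) qe u := rfl

lemma theTree_open : (theTree XS qe).OpenIn := by
  intro u
  change IsOpen (pv XS ⁻¹' leafSet (toR XS) qe u)
  by_cases hu : u = []
  · rw [hu, leafSet_nil, Set.preimage_univ]
    exact isOpen_univ
  · rw [leafSet_ne hu]
    exact (sorg_isOpen_Ico _ _).preimage continuous_subtype_val

include hX

/-- the sons of a node cover it -/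
lemma leafSet_cover {u : List ℕ} {x : ℝ} (hx : x ∈ leafSet (toR XS) qe u) (hX2 : x ∈ toR XS) :
    ∃ i, x ∈ leafSet (toR XS) qe (u ++ [i]) := by
  by_cases hu : u = []
  · subst hu
    obtain ⟨i, hi⟩ := rootChildIv_cover hX (X := toR XS) x
    exact ⟨i, by rw [List.nil_append, leafSet_single]; exact hi⟩
  · rw [leafSet_ne hu] at hx
    obtain ⟨i, hi⟩ := childIv_cover hX (segIv_good hX (qe := qe) u hu).1 u.length hx hX2
    exact ⟨i, by rw [leafSet_append hu]; exact hi⟩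

lemma leafSet_son_subset {u : List ℕ} (i : ℕ) :
    leafSet (toR XS) qe (u ++ [i]) ⊆ leafSet (toR XS) qe u := by
  by_cases hu : u = []
  · subst hu; rw [leafSet_nil]; exact Set.subset_univ _
  · rw [leafSet_append hu, leafSet_ne hu]
    have st := childIv_step hX (qe := qe) (segIv_good hX (qe := qe) u hu).1 u.length i
    intro x hx
    exact ⟨le_trans st.1 hx.1, lt_trans hx.2 st.2.2.1⟩

lemma leafSet_son_disj {u : List ℕ} {i j : ℕ} (hij : i ≠ j) :
    Disjoint (leafSet (toR XS) qe (u ++ [i])) (leafSet (toR XS) qe (u ++ [j])) := by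
  by_cases hu : u = []
  · subst hu
    rw [List.nil_append, List.nil_append, leafSet_single, leafSet_single]
    exact rootChildIv_disj hX hij
  · rw [leafSet_append hu, leafSet_append hu]
    exact childIv_disj hX (segIv_good hX (qe := qe) u hu).1 u.length hij

lemma theTree_ls : (theTree XS qe).LocallyStrict := by
  refine fun (u : List ℕ) _ => ?_
  constructor
  · ext x
    simp only [Set.mem_iUnion]
    constructor
    · intro hx
      obtain ⟨i, hi⟩ := leafSet_cover hX (x := pv XS x) hx x.2
      refine ⟨u ++ [i], mem_sons.2 ⟨i, rfl⟩, hi⟩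
    · rintro ⟨s, hs, hx⟩
      obtain ⟨i, rfl⟩ := mem_sons.1 hs
      exact leafSet_son_subset hX i hx
  · intro s hs t ht hst
    obtain ⟨i, rfl⟩ := mem_sons.1 hs
    obtain ⟨j, rfl⟩ := mem_sons.1 ht
    have hij : i ≠ j := by
      intro h
      exact hst (by rw [h])
    exact Disjoint.preimage _ (leafSet_son_disj hX hij)

lemma theTree_sb (hcov : (toR XS)ᶜ ⊆ Set.range qe) : (theTree XS qe).StrictBranches := by
  refine ⟨⟨[]⟩, ?_⟩
  intro B hB
  obtain ⟨u, huB, hulen, hustep, huniq⟩ := branch_struct hB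
  have hne : ∀ n, u (n + 1) ≠ [] := by
    intro n h
    have := hulen (n + 1)
    rw [h] at this
    simp at this
  set A : ℕ → ℝ := fun n => (segIv (toR XS) qe (u (n+1))).1 with hA
  set Bd : ℕ → ℝ := fun n => (segIv (toR XS) qe (u (n+1))).2 with hBd
  have good : ∀ n, A n < Bd n ∧ (n % 2 = 0 → A n ∈ toR XS) ∧ Bd n - A n ≤ (3/4:ℝ)^n := by
    intro n
    obtain ⟨g1, g2, g3⟩ := segIv_good hX (u (n+1)) (hne n)
    rw [hulen (n+1)] at g2 g3
    exact ⟨g1, fun h => g2 (by omega), by simpa using g3⟩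
  have hstep : ∀ n, A n ≤ A (n+1) ∧ Bd (n+1) < Bd n := by
    intro n
    obtain ⟨i, hi⟩ := hustep (n+1)
    have st := childIv_step hX (qe := qe) (good n).1 (u (n+1)).length i
    have e : segIv (toR XS) qe (u (n+2)) = childIv (toR XS) qe (u (n+1)).length
        (segIv (toR XS) qe (u (n+1))) i := by
      rw [hi, segIv_append (hne n)]
    constructor
    · show (segIv (toR XS) qe (u (n+2))).1 ≥ _
      rw [e]
      exact st.1
    · show (segIv (toR XS) qe (u (n+2))).2 < _
      rw [e]
      exact st.2.2.1
  have hAmono : Monotone A := monotone_nat_of_le_succ (fun n => (hstep n).1)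
  have hBdanti : ∀ n m, n ≤ m → Bd m ≤ Bd n := by
    intro n m h
    induction m with
    | zero => have : n = 0 := by omega
              rw [this]
    | succ m ih =>
      rcases Nat.lt_or_ge n (m+1) with h' | h'
      · exact le_trans (le_of_lt (hstep m).2) (ih (by omega))
      · have : n = m + 1 := by omega
        rw [this]
  have hbdd : BddAbove (Set.range A) := by
    refine ⟨Bd 0, ?_⟩
    rintro x ⟨n, rfl⟩
    exact le_trans (le_of_lt (good n).1) (hBdanti 0 n (by omega))
  set L : ℝ := ⨆ n, A n with hL
  have hAL : ∀ n, A n ≤ L := fun n => le_ciSup hbdd n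
  have hLBd : ∀ n, L < Bd n := by
    intro n
    have h1 : L ≤ Bd (n+1) := by
      apply ciSup_le
      intro m
      rcases le_or_gt m (n+1) with h | h
      · exact le_trans (hAmono h) (le_of_lt (good (n+1)).1)
      · exact le_trans (le_of_lt (good m).1) (hBdanti (n+1) m (by omega))
    exact lt_of_le_of_lt h1 (hstep n).2
  have hLX : L ∈ toR XS := by
    by_cases hstab : ∃ m, A m = L
    · obtain ⟨m, hm⟩ := hstab
      have h1 : A (2*m) = L := le_antisymm (hAL _) (hm ▸ hAmono (by omega))
      have := (good (2*m)).2.1 (by omega)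
      rwa [h1] at this
    · push_neg at hstab
      have hstab' : ∀ m, A m < L := fun m => lt_of_le_of_ne (hAL m) (hstab m)
      by_contra hLX
      obtain ⟨k, hk⟩ := hcov hLX
      -- at level 2k+1 the point qe k = L is excluded
      obtain ⟨i, hi⟩ := hustep (2*k+1)
      have hlen : (u (2*k+1)).length = 2*k+1 := hulen _
      have hins : insCond (toR XS) qe (2*k+1) (A (2*k)) (Bd (2*k)) := by
        refine ⟨by omega, ?_, ?_⟩
        · have e : (2*k+1-1)/2 = k := by omega
          rw [e, hk]
          exact ⟨hstab' _, hLBd _⟩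
        · have e : (2*k+1-1)/2 = k := by omega
          rw [e, hk]
          exact hLX
      have haX : A (2*k) ∈ toR XS := (good (2*k)).2.1 (by omega)
      have st := childIv_excl hX (qe := qe) (ab := segIv (toR XS) qe (u (2*k+1)))
        (good (2*k)).1 (2*k+1) i hins haX ?_
      · have e : segIv (toR XS) qe (u (2*k+2)) = childIv (toR XS) qe (2*k+1)
            (segIv (toR XS) qe (u (2*k+1))) i := by
          rw [hi, segIv_append (hne _), hlen]
        have e2 : (2*k+1-1)/2 = k := by omega
        rw [e2, hk] at st
        have : A (2*k+1) = L := by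
          show (segIv (toR XS) qe (u (2*k+2))).1 = L
          rw [e, st]
        exact absurd this (ne_of_lt (hstab' _))
      · have e : segIv (toR XS) qe (u (2*k+2)) = childIv (toR XS) qe (2*k+1)
            (segIv (toR XS) qe (u (2*k+1))) i := by
          rw [hi, segIv_append (hne _), hlen]
        have e2 : (2*k+1-1)/2 = k := by omega
        rw [e2, hk]
        rw [← e]
        exact ⟨le_of_lt (hstab' _), hLBd _⟩
  refine ⟨⟨L, hLX⟩, ?_⟩
  ext z
  simp only [Set.mem_iInter, Set.mem_singleton_iff]
  constructor
  · intro hz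
    have hzn : ∀ n, A n ≤ pv XS z ∧ pv XS z < Bd n := by
      intro n
      have h1 := hz (u (n+1)) (huB (n+1))
      rw [theTree_leaf, leafSet_ne (hne n)] at h1
      exact h1
    have hle : pv XS z ≤ L := by
      by_contra hc
      push_neg at hc
      obtain ⟨n, hn⟩ := exists_pow_lt_of_lt_one
        (show (0:ℝ) < pv XS z - L by linarith) (by norm_num : (3/4:ℝ) < 1)
      have h1 := (hzn n).2
      have h2 := (good n).2.2
      have h3 := hAL n
      linarith
    have hge : L ≤ pv XS z := ciSup_le (fun n => (hzn n).1)
    apply Subtype.ext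
    show pv XS z = L
    linarith
  · rintro rfl
    intro v hv
    have hv' := huniq v hv
    rcases Nat.eq_zero_or_pos v.length with h0 | hpos
    · have : v = [] := List.length_eq_zero_iff.1 h0
      rw [this, theTree_leaf, leafSet_nil]
      exact Set.mem_univ _
    · obtain ⟨n, hn⟩ : ∃ n, v.length = n + 1 := ⟨v.length - 1, by omega⟩
      rw [hv', hn, theTree_leaf, leafSet_ne (hne n)]
      exact ⟨hAL n, hLBd n⟩

end assembly

end PTaux
namespace PTaux

open Set

variable {X : Set ℝ} {qe : ℕ → ℝ}

/-! ### the chain of nodes through a point -/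

open Classical in
noncomputable def chn (X : Set ℝ) (qe : ℕ → ℝ) (p : ℝ) : ℕ → List ℕ
  | 0 => []
  | n+1 => (chn X qe p n) ++
      [if h : ∃ i, p ∈ leafSet X qe ((chn X qe p n) ++ [i]) then h.choose else 0]

lemma chn_len (p : ℝ) (n : ℕ) : (chn X qe p n).length = n := by
  induction n with
  | zero => rfl
  | succ n ih => simp [chn, ih]

section chn
variable {XS : Set SorgLine} (hX : (toR XS)ᶜ.Countable)

include hX

lemma chn_spec {p : ℝ} (hp : p ∈ toR XS) (n : ℕ) :
    p ∈ leafSet (toR XS) qe (chn (toR XS) qe p n) := by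
  induction n with
  | zero => rw [show chn (toR XS) qe p 0 = [] from rfl, leafSet_nil]; exact Set.mem_univ _
  | succ n ih =>
    have hex : ∃ i, p ∈ leafSet (toR XS) qe ((chn (toR XS) qe p n) ++ [i]) :=
      leafSet_cover hX ih hp
    show p ∈ leafSet (toR XS) qe _
    rw [chn, dif_pos hex]
    exact hex.choose_spec

/-! ### the rise lemma -/

lemma rise_lemma (p : ↥XS) {ε : ℝ} (hε : 0 < ε) {n : ℕ} (hodd : n % 2 = 1)
    (hsmall : (3/4:ℝ)^(n-1) ≤ ε) {U : Set ↥XS}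
    (hU : pv XS ⁻¹' (Set.Ico (pv XS p) (pv XS p + ε)) ⊆ U) :
    ∃ v ∈ (theTree XS qe).scope p, PiRefines ((theTree XS qe).shoot v) {U} ∧
      (theTree XS qe).height v = (n : Ordinal) := by
  set v : List ℕ := chn (toR XS) qe (pv XS p) n with hv
  have hvlen : v.length = n := chn_len _ n
  have hvne : v ≠ [] := by
    intro h
    rw [h] at hvlen
    simp at hvlen
    omega
  have hpmem : pv XS p ∈ leafSet (toR XS) qe v := chn_spec hX p.2 n
  refine ⟨v, ?_, ?_, ?_⟩
  · show p ∈ (theTree XS qe).leaf v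
    rw [theTree_leaf]
    exact hpmem
  · -- PiRefines
    intro D hD hDne
    rw [Set.mem_singleton_iff] at hD
    subst hD
    obtain ⟨hab, hpar, hgap⟩ := segIv_good hX (qe := qe) v hvne
    have haX : (segIv (toR XS) qe v).1 ∈ toR XS := hpar (by omega)
    obtain ⟨g, hg, hmono, h0, hlt, hunb, _⟩ := childIv_boundary hX (qe := qe) hab v.length haX
    rw [leafSet_ne hvne] at hpmem
    obtain ⟨J, hJ⟩ := hunb (pv XS p) hpmem.2
    set C : Set (List ℕ) := (fun i => v ++ [i]) '' (Set.Ici J) with hC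
    have happ_inj : Function.Injective (fun i : ℕ => v ++ [i]) := by
      intro i j h
      simpa using h
    refine ⟨⋃ s ∈ C, (theTree XS qe).leaf s, ⟨C, ?_, ?_, rfl⟩, ?_, ?_⟩
    · rintro s ⟨i, _, rfl⟩
      exact mem_sons.2 ⟨i, rfl⟩
    · apply Set.Finite.subset ((Set.finite_Iio J).image (fun i => v ++ [i]))
      rintro s ⟨hs1, hs2⟩
      obtain ⟨i, rfl⟩ := mem_sons.1 hs1
      refine ⟨i, ?_, rfl⟩
      by_contra hlt'
      exact hs2 ⟨i, by simpa using hlt', rfl⟩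
    · -- nonempty
      have hJlt : g J < g (J + 1) := hmono (by omega)
      obtain ⟨hy1, hy2, hy3⟩ := pick_spec hX hJlt
      refine ⟨⟨pick (toR XS) (g J) (g (J + 1)), hy1⟩, ?_⟩
      rw [Set.mem_iUnion₂]
      refine ⟨v ++ [J], ⟨J, Set.self_mem_Ici, rfl⟩, ?_⟩
      rw [theTree_leaf, leafSet_append hvne, hvlen]
      have := hg J
      rw [hvlen] at this
      rw [this]
      exact ⟨le_of_lt hy2, hy3⟩
    · -- subset of U
      intro z hz
      rw [Set.mem_iUnion₂] at hz
      obtain ⟨s, ⟨i, hiJ, rfl⟩, hzs⟩ := hz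
      rw [theTree_leaf, leafSet_append hvne, hvlen] at hzs
      have := hg i
      rw [hvlen] at this
      rw [this] at hzs
      apply hU
      have hb2 : (segIv (toR XS) qe v).2 ≤ pv XS p + ε := by
        have h1 : (segIv (toR XS) qe v).2 - (segIv (toR XS) qe v).1 ≤ ε := by
          rw [hvlen] at hgap
          linarith
        have h2 : (segIv (toR XS) qe v).1 ≤ pv XS p := hpmem.1
        linarith
      constructor
      · calc pv XS p ≤ g J := le_of_lt hJ
          _ ≤ g i := hmono.monotone hiJ
          _ ≤ pv XS z := hzs.1
      · calc pv XS z < g (i + 1) := hzs.2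
          _ < (segIv (toR XS) qe v).2 := hlt (i+1)
          _ ≤ pv XS p + ε := hb2
  · rw [show (theTree XS qe).height v = (v.length : Ordinal) from height_eq v, hvlen]

lemma theTree_grows : (theTree XS qe).GrowsInto := by
  intro p U hU
  obtain ⟨ε, hε, hsub⟩ := mem_nhds_sorg hU
  obtain ⟨m, hm⟩ := exists_pow_lt_of_lt_one hε (by norm_num : (3/4:ℝ) < 1)
  have hsmall : (3/4:ℝ)^(2*m+1-1) ≤ ε := by
    calc (3/4:ℝ)^(2*m+1-1) = (3/4:ℝ)^(2*m) := by norm_num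
      _ ≤ (3/4:ℝ)^m := pow_le_pow_of_le_one (by norm_num) (by norm_num) (by omega)
      _ ≤ ε := le_of_lt hm
  obtain ⟨v, h1, h2, _⟩ := rise_lemma hX p hε (n := 2*m+1) (by omega) hsmall hsub
  exact ⟨v, h1, h2⟩

lemma theTree_rise : PiRefines (cofin {k | ∃ n : ℕ, k = 2 * n + 1}) (theTree XS qe).Rise := by
  rintro D ⟨p, U, hU, rfl⟩ _
  obtain ⟨ε, hε, hsub⟩ := mem_nhds_sorg hU
  obtain ⟨m, hm⟩ := exists_pow_lt_of_lt_one hε (by norm_num : (3/4:ℝ) < 1)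
  set N := 2*m+1 with hN
  set Cex : Set ℕ := {k | (∃ n : ℕ, k = 2 * n + 1) ∧ k < N} with hCex
  refine ⟨{k | ∃ n : ℕ, k = 2 * n + 1} \ Cex, ⟨Cex, ?_, ?_, rfl⟩, ⟨N, ?_⟩, ?_⟩
  · exact Set.Finite.subset (Set.finite_Iio N) (fun k hk => hk.2)
  · exact fun k hk => hk.1
  · exact ⟨⟨m, rfl⟩, fun hc => absurd hc.2 (lt_irrefl N)⟩
  · rintro k ⟨⟨j, rfl⟩, hk2⟩
    have hkN : N ≤ 2*j+1 := by
      by_contra hc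
      exact hk2 ⟨⟨j, rfl⟩, by omega⟩
    have hsmall : (3/4:ℝ)^(2*j+1-1) ≤ ε := by
      calc (3/4:ℝ)^(2*j+1-1) = (3/4:ℝ)^(2*j) := by norm_num
        _ ≤ (3/4:ℝ)^m := pow_le_pow_of_le_one (by norm_num) (by norm_num) (by omega)
        _ ≤ ε := le_of_lt hm
    obtain ⟨v, h1, h2, h3⟩ := rise_lemma hX p hε (n := 2*j+1) (by omega) hsmall hsub
    exact ⟨v, h1, h2, h3⟩

lemma theTree_root : (theTree XS qe).IsRoot [] := by
  intro x
  rcases eq_or_ne ([] : List ℕ) x with h | h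
  · exact Or.inl h
  · exact Or.inr ⟨List.nil_prefix, h⟩

lemma theTree_leaf_nil : (theTree XS qe).leaf [] = Set.univ := by
  rw [theTree_leaf, leafSet_nil, Set.preimage_univ]

lemma theTree_pi (hcov : (toR XS)ᶜ ⊆ Set.range qe) : (theTree XS qe).IsPiTree := by
  refine ⟨⟨theTree_open, theTree_ls hX, ⟨RelIso.refl seqLT⟩, theTree_sb hX hcov,
    ⟨[], theTree_root hX, theTree_leaf_nil hX⟩⟩, theTree_grows hX⟩

end chn

end PTaux

/-- Part (c) of Lemma `lem.pi.tree.for.N.and.Sorg.l` of the paper. -/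
theorem cocountable_sorgenfrey_subspace_has_piTree
    (X : Set SorgLine) (hX : Xᶜ.Countable) :
    ∃ H : FoliageTree ↥X, H.IsPiTree ∧
      PiRefines (cofin {k | ∃ n : ℕ, k = 2 * n + 1}) H.Rise := by
  classical
  have hXr : (PTaux.toR X)ᶜ.Countable := hX
  have hcnt : ((insert (0:ℝ) ((PTaux.toR X)ᶜ)) : Set ℝ).Countable := hXr.insert _
  obtain ⟨qe, hqe⟩ := hcnt.exists_eq_range (Set.insert_nonempty _ _)
  have hcov : (PTaux.toR X)ᶜ ⊆ Set.range qe := by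
    rw [← hqe]
    exact Set.subset_insert _ _
  exact ⟨PTaux.theTree X qe, PTaux.theTree_pi hXr hcov, PTaux.theTree_rise hXr⟩
end
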